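/- arXiv:1106.2218 — 7 statements merged into one kernel-verified Lean document; each statement's English description precedes it below -/
import Mathlib

section
/- Let L be a semiexact reflection on T with unit l : Id → L. Since the class of L-local objects is closed under desuspension, for each object X there is a unique morphism ν_X : LX → Σ⁻¹LΣX with ν_X ∘ l_X = Σ⁻¹l_{ΣX}, and hence a natural morphism Σν_X : ΣLX → LΣX with Σν_X ∘ Σl_X = l_{ΣX}. If, for a given object X, the object ΣLX is L-local, then Σν_X : ΣLX → LΣX is an isomorphism. -/
open CategoryTheory Category Limits Pretriangulated

universe v u

namespace Paper

section General

variable {T : Type u} [Category.{v} T]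

/-- A full subcategory (given by its class of objects) is closed under retracts. -/
def ClosedUnderRetracts (S : Set T) : Prop :=
  ∀ ⦃A B : T⦄, A ∈ S → (∃ (i : B ⟶ A) (r : A ⟶ B), i ≫ r = 𝟙 B) → B ∈ S

/-- A full subcategory is weakly reflective: every object admits a weak reflection into it. -/
def WeaklyReflective (S : Set T) : Prop :=
  ∀ X : T, ∃ (X' : T) (l : X ⟶ X'), X' ∈ S ∧
    ∀ ⦃Y : T⦄, Y ∈ S → ∀ f : X ⟶ Y, ∃ g : X' ⟶ Y, l ≫ g = f

/-- A full subcategory is weakly coreflective. -/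
def WeaklyCoreflective (S : Set T) : Prop :=
  ∀ X : T, ∃ (X' : T) (c : X' ⟶ X), X' ∈ S ∧
    ∀ ⦃Y : T⦄, Y ∈ S → ∀ f : Y ⟶ X, ∃ g : Y ⟶ X', g ≫ c = f

/-- A full subcategory is reflective: the inclusion has a left adjoint. -/
def ReflectiveSet (S : Set T) : Prop :=
  (ObjectProperty.ι (fun X => X ∈ S)).IsRightAdjoint

/-- A full subcategory is coreflective: the inclusion has a right adjoint. -/
def CoreflectiveSet (S : Set T) : Prop :=
  (ObjectProperty.ι (fun X => X ∈ S)).IsLeftAdjoint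

end General

/-- The data of an endofunctor together with a natural transformation from the identity
(a candidate reflection with its unit). -/
structure ReflectionData (T : Type u) [Category.{v} T] where
  L : T ⥤ T
  unit : 𝟭 T ⟶ L

/-- The data of an endofunctor together with a natural transformation to the identity
(a candidate coreflection with its counit). -/
structure CoreflectionData (T : Type u) [Category.{v} T] where
  C : T ⥤ T
  counit : C ⟶ 𝟭 T

section ReflData

variable {T : Type u} [Category.{v} T]

/-- The `L`-local objects: the essential image of `L`. -/
def ReflectionData.localObjects (R : ReflectionData T) : Set T := R.L.essImage

/-- `(L, l)` is a reflection: every morphism to an `L`-local object factors uniquely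
through the unit. -/
def ReflectionData.IsReflection (R : ReflectionData T) : Prop :=
  ∀ ⦃X W : T⦄, W ∈ R.localObjects → ∀ f : X ⟶ W,
    ∃! g : R.L.obj X ⟶ W, R.unit.app X ≫ g = f

/-- The `C`-colocal objects: the essential image of `C`. -/
def CoreflectionData.colocalObjects (Q : CoreflectionData T) : Set T := Q.C.essImage

/-- `(C, c)` is a coreflection: every morphism from a `C`-colocal object factors uniquely
through the counit. -/
def CoreflectionData.IsCoreflection (Q : CoreflectionData T) : Prop :=
  ∀ ⦃X W : T⦄, W ∈ Q.colocalObjects → ∀ f : W ⟶ X,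
    ∃! g : W ⟶ Q.C.obj X, g ≫ Q.counit.app X = f

end ReflData

section Triangulated

variable {T : Type u} [Category.{v} T] [HasZeroObject T] [Preadditive T] [HasShift T ℤ]
  [∀ n : ℤ, (shiftFunctor T n).Additive] [Pretriangulated T]

/-- Closed under fibres: the first vertex of a distinguished triangle whose second and third
vertices lie in `S` lies in `S`. -/
def ClosedUnderFibres (S : Set T) : Prop :=
  ∀ ⦃X Y Z : T⦄ (u : X ⟶ Y) (v : Y ⟶ Z) (w : Z ⟶ X⟦(1:ℤ)⟧),
    (Triangle.mk u v w ∈ distTriang T) → Y ∈ S → Z ∈ S → X ∈ S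

/-- Closed under cofibres. -/
def ClosedUnderCofibres (S : Set T) : Prop :=
  ∀ ⦃X Y Z : T⦄ (u : X ⟶ Y) (v : Y ⟶ Z) (w : Z ⟶ X⟦(1:ℤ)⟧),
    (Triangle.mk u v w ∈ distTriang T) → X ∈ S → Y ∈ S → Z ∈ S

/-- Closed under extensions. -/
def ClosedUnderExtensions (S : Set T) : Prop :=
  ∀ ⦃X Y Z : T⦄ (u : X ⟶ Y) (v : Y ⟶ Z) (w : Z ⟶ X⟦(1:ℤ)⟧),
    (Triangle.mk u v w ∈ distTriang T) → X ∈ S → Z ∈ S → Y ∈ S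

/-- `^⊥D`: objects `X` with `T(X, ΣᵏD) = 0` for all `D ∈ D` and all integers `k`. -/
def leftOrth (D : Set T) : Set T :=
  {X | ∀ ⦃E : T⦄, E ∈ D → ∀ k : ℤ, ∀ f : X ⟶ E⟦k⟧, f = 0}

/-- `D^⊥`: objects `Y` with `T(ΣᵏD, Y) = 0` for all `D ∈ D` and all integers `k`. -/
def rightOrth (D : Set T) : Set T :=
  {Y | ∀ ⦃E : T⦄, E ∈ D → ∀ k : ℤ, ∀ f : E⟦k⟧ ⟶ Y, f = 0}

/-- `⊾D`: objects `X` with `T(X, ΣᵏD) = 0` for all `D ∈ D` and all `k ≤ 0`. -/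
def leftSemiOrth (D : Set T) : Set T :=
  {X | ∀ ⦃E : T⦄, E ∈ D → ∀ k : ℤ, k ≤ 0 → ∀ f : X ⟶ E⟦k⟧, f = 0}

/-- `D⊿`: objects `Y` with `T(ΣᵏD, Y) = 0` for all `D ∈ D` and all `k ≥ 0`. -/
def rightSemiOrth (D : Set T) : Set T :=
  {Y | ∀ ⦃E : T⦄, E ∈ D → ∀ k : ℤ, 0 ≤ k → ∀ f : E⟦k⟧ ⟶ Y, f = 0}

section WithLimits

variable [HasProducts.{v} T] [HasCoproducts.{v} T]

/-- Closed under all (small) products. -/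
def ClosedUnderProducts (S : Set T) : Prop :=
  ∀ ⦃ι : Type v⦄ (f : ι → T), (∀ i, f i ∈ S) → (∏ᶜ f) ∈ S

/-- Closed under all (small) coproducts. -/
def ClosedUnderCoproducts (S : Set T) : Prop :=
  ∀ ⦃ι : Type v⦄ (f : ι → T), (∀ i, f i ∈ S) → (∐ f) ∈ S

/-- Semilocalizing: closed under coproducts, cofibres and extensions. -/
def IsSemilocalizing (S : Set T) : Prop :=
  ClosedUnderCoproducts S ∧ ClosedUnderCofibres S ∧ ClosedUnderExtensions S

/-- Semicolocalizing: closed under products, fibres and extensions. -/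
def IsSemicolocalizing (S : Set T) : Prop :=
  ClosedUnderProducts S ∧ ClosedUnderFibres S ∧ ClosedUnderExtensions S

/-- Localizing: closed under coproducts, fibres, cofibres and extensions. -/
def IsLocalizing (S : Set T) : Prop :=
  ClosedUnderCoproducts S ∧ ClosedUnderFibres S ∧ ClosedUnderCofibres S ∧
    ClosedUnderExtensions S

/-- Colocalizing: closed under products, fibres, cofibres and extensions. -/
def IsColocalizing (S : Set T) : Prop :=
  ClosedUnderProducts S ∧ ClosedUnderFibres S ∧ ClosedUnderCofibres S ∧
    ClosedUnderExtensions S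

/-- The smallest semilocalizing subcategory containing `D`. -/
def semiloc (D : Set T) : Set T := ⋂₀ {S : Set T | IsSemilocalizing S ∧ D ⊆ S}

/-- The smallest semicolocalizing subcategory containing `D`. -/
def semicoloc (D : Set T) : Set T := ⋂₀ {S : Set T | IsSemicolocalizing S ∧ D ⊆ S}

/-- The smallest localizing subcategory containing `D`. -/
def loc (D : Set T) : Set T := ⋂₀ {S : Set T | IsLocalizing S ∧ D ⊆ S}

/-- The smallest colocalizing subcategory containing `D`. -/
def coloc (D : Set T) : Set T := ⋂₀ {S : Set T | IsColocalizing S ∧ D ⊆ S}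

end WithLimits

end Triangulated


section Statements

variable {T : Type u} [Category.{v} T] [HasZeroObject T] [Preadditive T] [HasShift T ℤ]
  [∀ n : ℤ, (shiftFunctor T n).Additive] [Pretriangulated T]
  [HasProducts.{v} T] [HasCoproducts.{v} T]

open ZeroObject in
/-- The zero object is local. -/
lemma aux_zero_local (R : ReflectionData T) (hsemi : IsSemicolocalizing R.localObjects) :
    (0 : T) ∈ R.localObjects := by
  have h := hsemi.1 (fun _ : PEmpty.{v+1} => (0 : T)) (fun i => i.elim)
  have hterm : IsTerminal (∏ᶜ (fun _ : PEmpty.{v+1} => (0 : T))) :=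
    IsTerminal.ofUniqueHom (fun A => Pi.lift (fun i => i.elim))
      (fun A m => limit.hom_ext (fun j => j.as.elim))
  have hz : IsZero (∏ᶜ (fun _ : PEmpty.{v+1} => (0 : T))) := by
    rw [IsZero.iff_id_eq_zero]
    exact hterm.hom_ext _ _
  exact Functor.essImage.ofIso hz.isoZero h

/-- Local objects are closed under desuspension. -/
lemma aux_desusp (R : ReflectionData T) (hsemi : IsSemicolocalizing R.localObjects)
    {V : T} (hV : V ∈ R.localObjects) : V⟦(-1:ℤ)⟧ ∈ R.localObjects := by
  have h0 := aux_zero_local R hsemi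
  have hV1 : (V⟦(-1:ℤ)⟧)⟦(1:ℤ)⟧ ∈ R.localObjects :=
    Functor.essImage.ofIso ((shiftEquiv T (1:ℤ)).counitIso.symm.app V) hV
  have hdt := rot_of_distTriang _ (contractible_distinguished (V⟦(-1:ℤ)⟧))
  exact hsemi.2.1 _ _ _ hdt h0 hV1

/-- Key lemma: any morphism `ΣX ⟶ W` with `W` local factors uniquely through `Σl_X`. -/
lemma aux_key (R : ReflectionData T) (hrefl : R.IsReflection)
    (hsemi : IsSemicolocalizing R.localObjects)
    {X W : T} (hW : W ∈ R.localObjects) (f : X⟦(1:ℤ)⟧ ⟶ W) :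
    ∃! h : (R.L.obj X)⟦(1:ℤ)⟧ ⟶ W, (R.unit.app X)⟦(1:ℤ)⟧' ≫ h = f := by
  have hW' : W⟦(-1:ℤ)⟧ ∈ R.localObjects := aux_desusp R hsemi hW
  set E := shiftEquiv T (1:ℤ) with hE
  obtain ⟨g, hg, hgu⟩ := hrefl hW'
    ((E.unit.app X ≫ E.inverse.map f : X ⟶ W⟦(-1:ℤ)⟧))
  have key : ∀ ν : E.functor.obj (R.L.obj X) ⟶ W,
      E.functor.map (R.unit.app X) ≫ ν = f →
      ν = E.functor.map g ≫ E.counit.app W := by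
    intro ν hν
    have nat := E.unit.naturality (R.unit.app X)
    simp only [Functor.id_map, Functor.comp_map] at nat
    have hg' : R.unit.app X ≫ (E.unit.app (R.L.obj X) ≫ E.inverse.map ν)
        = E.unit.app X ≫ E.inverse.map f := by
      rw [← Category.assoc, nat, Category.assoc, ← E.inverse.map_comp, hν]
      rfl
    have heq := hgu _ hg'
    have cnat := E.counit.naturality ν
    simp only [Functor.id_map, Functor.comp_map] at cnat
    have tri := E.functor_unit_comp (R.L.obj X)
    calc ν = 𝟙 _ ≫ ν := (Category.id_comp ν).symm
      _ = (E.functor.map (E.unit.app (R.L.obj X))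
            ≫ E.counit.app (E.functor.obj (R.L.obj X))) ≫ ν := by rw [tri]
      _ = E.functor.map (E.unit.app (R.L.obj X))
            ≫ (E.counit.app (E.functor.obj (R.L.obj X)) ≫ ν) := by rw [Category.assoc]
      _ = E.functor.map (E.unit.app (R.L.obj X))
            ≫ (E.functor.map (E.inverse.map ν) ≫ E.counit.app W) := by rw [cnat]
      _ = E.functor.map (E.unit.app (R.L.obj X) ≫ E.inverse.map ν)
            ≫ E.counit.app W := by rw [E.functor.map_comp, Category.assoc]
      _ = E.functor.map g ≫ E.counit.app W := by rw [heq]; rfl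
  refine ⟨E.functor.map g ≫ E.counit.app W, ?_, fun ν hν => key ν hν⟩
  show E.functor.map (R.unit.app X) ≫ (E.functor.map g ≫ E.counit.app W) = f
  have cnat := E.counit.naturality f
  simp only [Functor.id_map, Functor.comp_map] at cnat
  have tri := E.functor_unit_comp X
  have h1 : E.functor.map (R.unit.app X ≫ g) ≫ E.counit.app W = f :=
    (congrArg (fun k => E.functor.map k ≫ E.counit.app W) hg).trans
      (((E.functor.map_comp _ _) =≫ E.counit.app W).trans ((Category.assoc _ _ _).trans
        ((E.functor.map (E.unit.app X) ≫= cnat).trans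
          ((Category.assoc _ _ _).symm.trans ((tri =≫ f).trans (Category.id_comp f))))))
  exact (Category.assoc _ _ _).symm.trans
    (((E.functor.map_comp (R.unit.app X) g).symm =≫ E.counit.app W).trans h1)

/-- For a semiexact reflection `L` with unit `l`, for each `X` there is a unique
morphism `Σν_X : ΣLX ⟶ LΣX` with `Σν_X ∘ Σl_X = l_{ΣX}`, and if `ΣLX` is `L`-local then
`Σν_X` is an isomorphism. -/
theorem statement0 (R : ReflectionData T) (hrefl : R.IsReflection)
    (hsemi : IsSemicolocalizing R.localObjects) (X : T) :
    (∃! ν : (R.L.obj X)⟦(1:ℤ)⟧ ⟶ R.L.obj (X⟦(1:ℤ)⟧),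
        (R.unit.app X)⟦(1:ℤ)⟧' ≫ ν = R.unit.app (X⟦(1:ℤ)⟧)) ∧
    (∀ ν : (R.L.obj X)⟦(1:ℤ)⟧ ⟶ R.L.obj (X⟦(1:ℤ)⟧),
        (R.unit.app X)⟦(1:ℤ)⟧' ≫ ν = R.unit.app (X⟦(1:ℤ)⟧) →
        (R.L.obj X)⟦(1:ℤ)⟧ ∈ R.localObjects → IsIso ν) := by
  have hLX1 : R.L.obj (X⟦(1:ℤ)⟧) ∈ R.localObjects := R.L.obj_mem_essImage _
  constructor
  · exact aux_key R hrefl hsemi hLX1 (R.unit.app (X⟦(1:ℤ)⟧))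
  · intro ν hν hloc
    obtain ⟨μ, hμ, hμu⟩ := @hrefl (X⟦(1:ℤ)⟧) ((R.L.obj X)⟦(1:ℤ)⟧) hloc
      ((R.unit.app X)⟦(1:ℤ)⟧')
    obtain ⟨g, hg, hgu⟩ := @hrefl (X⟦(1:ℤ)⟧) (R.L.obj (X⟦(1:ℤ)⟧)) hLX1
      (R.unit.app (X⟦(1:ℤ)⟧))
    have hμν : μ ≫ ν = 𝟙 _ := by
      have h1 : μ ≫ ν = g := by
        apply hgu
        rw [← Category.assoc, hμ, hν]
      have h2 : 𝟙 _ = g := by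
        apply hgu
        rw [Category.comp_id]
      rw [h1, ← h2]
    have hνμ : ν ≫ μ = 𝟙 _ := by
      obtain ⟨h, hh, hhu⟩ := aux_key R hrefl hsemi (X := X) hloc
        ((R.unit.app X)⟦(1:ℤ)⟧')
      have h1 : ν ≫ μ = h := by
        apply hhu
        rw [← Category.assoc, hν, hμ]
      have h2 : 𝟙 _ = h := by
        apply hhu
        rw [Category.comp_id]
      rw [h1, ← h2]
    exact ⟨μ, hνμ, hμν⟩

end Statements

end Paper
end

section
/- A reflection L on a triangulated category T is semiexact (the class of L-local objects is semicolocalizing) if and only if L preserves every distinguished triangle X → Y → Z → ΣX in which Z is L-local, i.e., applying L and the unit yields a distinguished triangle LX → LY → LZ → ΣLX. -/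
open CategoryTheory Category Limits Pretriangulated

universe v u

namespace Paper

section Statements

variable {T : Type u} [Category.{v} T] [HasZeroObject T] [Preadditive T] [HasShift T ℤ]
  [∀ n : ℤ, (shiftFunctor T n).Additive] [Pretriangulated T]
  [HasProducts.{v} T] [HasCoproducts.{v} T]

set_option linter.unusedSectionVars false

lemma mem_local_obj (R : ReflectionData T) (X : T) : R.L.obj X ∈ R.localObjects :=
  R.L.obj_mem_essImage X

lemma local_of_iso (R : ReflectionData T) {A B : T} (e : A ≅ B) (hA : A ∈ R.localObjects) :
    B ∈ R.localObjects :=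
  Functor.essImage.ofIso e hA

lemma unit_hom_ext (R : ReflectionData T) (hrefl : R.IsReflection) {X W : T}
    (hW : W ∈ R.localObjects) {g₁ g₂ : R.L.obj X ⟶ W}
    (h : R.unit.app X ≫ g₁ = R.unit.app X ≫ g₂) : g₁ = g₂ := by
  obtain ⟨g, hg, hu⟩ := hrefl hW (R.unit.app X ≫ g₁)
  rw [hu g₁ rfl, hu g₂ h.symm]

lemma isIso_unit_of_local (R : ReflectionData T) (hrefl : R.IsReflection) {W : T}
    (hW : W ∈ R.localObjects) : IsIso (R.unit.app W) := by
  obtain ⟨g, hg, -⟩ := hrefl hW (𝟙 W)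
  refine ⟨g, hg, ?_⟩
  exact unit_hom_ext R hrefl (mem_local_obj R W)
    (by rw [← Category.assoc, hg]; simp)

lemma local_of_isIso_unit (R : ReflectionData T) {W : T} (h : IsIso (R.unit.app W)) :
    W ∈ R.localObjects :=
  Functor.essImage.ofIso (asIso (R.unit.app W)).symm (mem_local_obj R W)

lemma unit_nat (R : ReflectionData T) {X Y : T} (u : X ⟶ Y) :
    R.unit.app X ≫ R.L.map u = u ≫ R.unit.app Y := by
  simpa using (R.unit.naturality u).symm

/-- A reflection `L` on a triangulated category is semiexact if and only if `L`
preserves every distinguished triangle `X → Y → Z → ΣX` in which `Z` is `L`-local: applying `L`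
and the unit yields a distinguished triangle `LX → LY → LZ → ΣLX`. -/
theorem statement2 (R : ReflectionData T) (hrefl : R.IsReflection) :
    IsSemicolocalizing R.localObjects ↔
      ∀ ⦃X Y Z : T⦄ (u : X ⟶ Y) (v : Y ⟶ Z) (w : Z ⟶ X⟦(1:ℤ)⟧),
        (Triangle.mk u v w ∈ distTriang T) → Z ∈ R.localObjects →
        ∃ w' : R.L.obj Z ⟶ (R.L.obj X)⟦(1:ℤ)⟧,
          R.unit.app Z ≫ w' = w ≫ (R.unit.app X)⟦(1:ℤ)⟧' ∧
          Triangle.mk (R.L.map u) (R.L.map v) w' ∈ distTriang T := by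
  constructor
  · rintro ⟨hprod, hfib, hext⟩ X Y Z u v w hT hZ
    -- factor `v` through the unit of `Y`
    obtain ⟨vbar, hvbar, -⟩ := hrefl hZ v
    -- take the fibre of `vbar`
    obtain ⟨F, f₀, δ, hB⟩ := distinguished_cocone_triangle₁ vbar
    have hF : F ∈ R.localObjects := hfib f₀ vbar δ hB (mem_local_obj R Y) hZ
    have hf₀v : f₀ ≫ vbar = 0 := comp_distTriang_mor_zero₁₂ _ hB
    -- complete `(unit Y, 𝟙 Z)` to a morphism of triangles
    obtain ⟨α, hα₁, hα₂⟩ : ∃ α : X ⟶ F, u ≫ R.unit.app Y = α ≫ f₀ ∧ w ≫ α⟦(1:ℤ)⟧' = 𝟙 Z ≫ δ :=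
      complete_distinguished_triangle_morphism₁ _ _ hT hB
      (R.unit.app Y) (𝟙 Z) (by change v ≫ 𝟙 Z = R.unit.app Y ≫ vbar; rw [comp_id, hvbar])
    rw [id_comp] at hα₂
    -- `α : X ⟶ F` with `u ≫ unit Y = α ≫ f₀` and `w ≫ α⟦1⟧' = δ`.
    -- `(F, α)` satisfies the universal property of the reflection of `X`:
    have Hsurj : ∀ {W : T}, W ∈ R.localObjects → ∀ f : X ⟶ W, ∃ g : F ⟶ W, α ≫ g = f := by
      intro W hW f
      have hvw0 : v ≫ w = 0 := comp_distTriang_mor_zero₂₃ _ hT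
      have hvw : v ≫ (w ≫ f⟦(1:ℤ)⟧') = 0 := by rw [← assoc, hvw0, zero_comp]
      obtain ⟨V, j, ζ, hV⟩ := distinguished_cocone_triangle₁ (w ≫ f⟦(1:ℤ)⟧')
      have hjk : j ≫ (w ≫ f⟦(1:ℤ)⟧') = 0 := comp_distTriang_mor_zero₁₂ _ hV
      have hVS : V ∈ R.localObjects := by
        have h1 := inv_rot_of_distTriang _ hV
        exact hext _ _ _ h1
          (local_of_iso R ((shiftEquiv T (1:ℤ)).unitIso.app W) hW) hZ
      obtain ⟨f', hf'⟩ : ∃ f' : Y ⟶ V, v = f' ≫ j := Triangle.coyoneda_exact₂ _ hV v (by exact hvw)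
      obtain ⟨f'', hf'', -⟩ := hrefl hVS f'
      have hvb : vbar = f'' ≫ j := by
        apply unit_hom_ext R hrefl hZ
        rw [hvbar, hf', ← hf'', assoc]
      have hvk : vbar ≫ (w ≫ f⟦(1:ℤ)⟧') = 0 := by rw [hvb, assoc, hjk, comp_zero]
      obtain ⟨g', hg'⟩ : ∃ g' : F⟦(1:ℤ)⟧ ⟶ W⟦(1:ℤ)⟧, w ≫ f⟦(1:ℤ)⟧' = δ ≫ g' :=
        Triangle.yoneda_exact₃ _ hB (w ≫ f⟦(1:ℤ)⟧') hvk
      obtain ⟨g₁, hg₁⟩ : ∃ g₁ : F ⟶ W, g₁⟦(1:ℤ)⟧' = g' :=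
        ⟨(shiftFunctor T (1:ℤ)).preimage g', (shiftFunctor T (1:ℤ)).map_preimage g'⟩
      have h1 : w ≫ (α⟦(1:ℤ)⟧' ≫ g') = w ≫ f⟦(1:ℤ)⟧' := by
        rw [← assoc, hα₂, hg']
      have hd : w ≫ (f - α ≫ g₁)⟦(1:ℤ)⟧' = 0 := by
        simp only [Functor.map_sub, Functor.map_comp, hg₁, Preadditive.comp_sub, h1,
          sub_self]
      obtain ⟨e, he⟩ : ∃ e : Y⟦(1:ℤ)⟧ ⟶ W⟦(1:ℤ)⟧, (f - α ≫ g₁)⟦(1:ℤ)⟧' = (-(u⟦(1:ℤ)⟧')) ≫ e :=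
        Triangle.yoneda_exact₃ _ (rot_of_distTriang _ hT)
        ((f - α ≫ g₁)⟦(1:ℤ)⟧') (by exact hd)
      have he' : (f - α ≫ g₁)⟦(1:ℤ)⟧' = (-(u⟦(1:ℤ)⟧')) ≫ e := by simpa using he
      obtain ⟨h, hh⟩ : ∃ h : Y ⟶ W, h⟦(1:ℤ)⟧' = e :=
        ⟨(shiftFunctor T (1:ℤ)).preimage e, (shiftFunctor T (1:ℤ)).map_preimage e⟩
      have hfd : f - α ≫ g₁ = -(u ≫ h) := by
        apply (shiftFunctor T (1:ℤ)).map_injective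
        rw [he']
        simp [hh]
      obtain ⟨h', hh', -⟩ := hrefl hW (-h)
      refine ⟨g₁ + f₀ ≫ h', ?_⟩
      have hsum : α ≫ (g₁ + f₀ ≫ h') = α ≫ g₁ + u ≫ (R.unit.app Y ≫ h') := by
        rw [Preadditive.comp_add, ← assoc, ← hα₁, assoc]
      rw [hsum, hh', Preadditive.comp_neg, ← hfd]
      abel
    have Hinj : ∀ {W : T}, W ∈ R.localObjects → ∀ g : F ⟶ W, α ≫ g = 0 → g = 0 := by
      intro W hW g hg
      have hδ : δ ≫ g⟦(1:ℤ)⟧' = 0 := by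
        rw [← hα₂, assoc, ← Functor.map_comp, hg, Functor.map_zero, comp_zero]
      obtain ⟨e, he⟩ : ∃ e : (R.L.obj Y)⟦(1:ℤ)⟧ ⟶ W⟦(1:ℤ)⟧, g⟦(1:ℤ)⟧' = (-(f₀⟦(1:ℤ)⟧')) ≫ e :=
        Triangle.yoneda_exact₃ _ (rot_of_distTriang _ hB)
        (g⟦(1:ℤ)⟧') (by exact hδ)
      have he' : g⟦(1:ℤ)⟧' = (-(f₀⟦(1:ℤ)⟧')) ≫ e := by simpa using he
      obtain ⟨h, hh⟩ : ∃ h : R.L.obj Y ⟶ W, h⟦(1:ℤ)⟧' = e :=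
        ⟨(shiftFunctor T (1:ℤ)).preimage e, (shiftFunctor T (1:ℤ)).map_preimage e⟩
      have hgf : g = f₀ ≫ (-h) := by
        apply (shiftFunctor T (1:ℤ)).map_injective
        rw [he']
        simp [hh]
      have h2 : u ≫ (R.unit.app Y ≫ (-h)) = 0 := by
        rw [← assoc, hα₁, assoc, ← hgf, hg]
      obtain ⟨h₂, hh₂⟩ : ∃ h₂ : Z ⟶ W, R.unit.app Y ≫ (-h) = v ≫ h₂ :=
        Triangle.yoneda_exact₂ _ hT (R.unit.app Y ≫ (-h)) h2
      have hfin : -h = vbar ≫ h₂ := by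
        apply unit_hom_ext R hrefl hW
        rw [hh₂, ← assoc, hvbar]
      rw [hgf, hfin, ← assoc, hf₀v, zero_comp]
    -- compare `F` with `L X`
    obtain ⟨θ, hθ, -⟩ := hrefl hF α
    obtain ⟨θ', hθ'⟩ := Hsurj (mem_local_obj R X) (R.unit.app X)
    have hθθ' : θ ≫ θ' = 𝟙 _ := unit_hom_ext R hrefl (mem_local_obj R X)
      (by rw [← assoc, hθ, hθ', comp_id])
    have hθ'θ : θ' ≫ θ = 𝟙 _ := by
      have h0 := Hinj hF (θ' ≫ θ - 𝟙 F)
        (by rw [Preadditive.comp_sub, ← assoc, hθ', hθ, comp_id, sub_self])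
      exact sub_eq_zero.mp h0
    have hθiso : IsIso θ := ⟨θ', hθθ', hθ'θ⟩
    have hZiso : IsIso (R.unit.app Z) := isIso_unit_of_local R hrefl hZ
    have hLu : θ ≫ f₀ = R.L.map u := unit_hom_ext R hrefl (mem_local_obj R Y)
      (by rw [← assoc, hθ, ← hα₁, unit_nat])
    have hLv : vbar ≫ R.unit.app Z = R.L.map v := unit_hom_ext R hrefl (mem_local_obj R Z)
      (by rw [← assoc, hvbar, unit_nat])
    have hθ1 : IsIso (θ⟦(1:ℤ)⟧') := by infer_instance
    refine ⟨inv (R.unit.app Z) ≫ δ ≫ inv (θ⟦(1:ℤ)⟧'), ?_, ?_⟩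
    · rw [IsIso.hom_inv_id_assoc, ← hα₂, ← hθ, Functor.map_comp, assoc, assoc,
        IsIso.hom_inv_id, comp_id]
    · refine isomorphic_distinguished _ hB _ ?_
      refine Triangle.isoMk _ _ (asIso θ : R.L.obj X ≅ F) (Iso.refl _) (asIso (R.unit.app Z)).symm
        ?_ ?_ ?_
      · change R.L.map u ≫ 𝟙 _ = θ ≫ f₀
        rw [comp_id, hLu]
      · change R.L.map v ≫ inv (R.unit.app Z) = 𝟙 _ ≫ vbar
        rw [id_comp, ← hLv, assoc, IsIso.hom_inv_id, comp_id]
      · change (inv (R.unit.app Z) ≫ δ ≫ inv (θ⟦(1:ℤ)⟧')) ≫ θ⟦(1:ℤ)⟧' = inv (R.unit.app Z) ≫ δ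
        simp
  · intro hP
    refine ⟨?_, ?_, ?_⟩
    · -- closed under products
      intro ι f hf
      have hg : ∀ i, ∃ g : R.L.obj (∏ᶜ f) ⟶ f i, R.unit.app (∏ᶜ f) ≫ g = Pi.π f i :=
        fun i => (hrefl (hf i) (Pi.π f i)).exists
      choose g hg using hg
      have h1 : R.unit.app (∏ᶜ f) ≫ Pi.lift g = 𝟙 _ := by
        ext i
        simp [hg i]
      have h2 : Pi.lift g ≫ R.unit.app (∏ᶜ f) = 𝟙 _ :=
        unit_hom_ext R hrefl (mem_local_obj R _) (by rw [← assoc, h1, id_comp, comp_id])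
      exact local_of_isIso_unit R ⟨Pi.lift g, h1, h2⟩
    · -- closed under fibres
      intro X Y Z u v w hT hY hZ
      obtain ⟨w', hw', hT'⟩ := hP u v w hT hZ
      let φ : Triangle.mk u v w ⟶ Triangle.mk (R.L.map u) (R.L.map v) w' :=
        { hom₁ := R.unit.app X
          hom₂ := R.unit.app Y
          hom₃ := R.unit.app Z
          comm₁ := by change u ≫ R.unit.app Y = R.unit.app X ≫ R.L.map u; rw [unit_nat]
          comm₂ := by change v ≫ R.unit.app Z = R.unit.app Y ≫ R.L.map v; rw [unit_nat]
          comm₃ := by change w ≫ (R.unit.app X)⟦(1:ℤ)⟧' = R.unit.app Z ≫ w'; rw [hw'] }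
      have h1 : IsIso φ.hom₁ := isIso₁_of_isIso₂₃ φ hT hT'
        (isIso_unit_of_local R hrefl hY) (isIso_unit_of_local R hrefl hZ)
      exact local_of_isIso_unit R h1
    · -- closed under extensions
      intro X Y Z u v w hT hX hZ
      obtain ⟨w', hw', hT'⟩ := hP u v w hT hZ
      let φ : Triangle.mk u v w ⟶ Triangle.mk (R.L.map u) (R.L.map v) w' :=
        { hom₁ := R.unit.app X
          hom₂ := R.unit.app Y
          hom₃ := R.unit.app Z
          comm₁ := by change u ≫ R.unit.app Y = R.unit.app X ≫ R.L.map u; rw [unit_nat]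
          comm₂ := by change v ≫ R.unit.app Z = R.unit.app Y ≫ R.L.map v; rw [unit_nat]
          comm₃ := by change w ≫ (R.unit.app X)⟦(1:ℤ)⟧' = R.unit.app Z ≫ w'; rw [hw'] }
      have h2 : IsIso φ.hom₂ := isIso₂_of_isIso₁₃ φ hT hT'
        (isIso_unit_of_local R hrefl hX) (isIso_unit_of_local R hrefl hZ)
      exact local_of_isIso_unit R h2

end Statements

end Paper
end

section
/- A coreflection C on a triangulated category T is semiexact (the class of C-colocal objects is semilocalizing) if and only if C preserves every distinguished triangle X → Y → Z → ΣX in which X is C-colocal, i.e., applying C and the counit yields a distinguished triangle CX → CY → CZ → ΣCX. -/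
open CategoryTheory Category Limits Pretriangulated

universe v u

namespace Paper

section AuxProofs

variable {T : Type u} [Category.{v} T] [HasZeroObject T] [Preadditive T] [HasShift T ℤ]
  [∀ n : ℤ, (shiftFunctor T n).Additive] [Pretriangulated T]

namespace CoreflAux

open ZeroObject

set_option linter.unusedSectionVars false

variable (Q : CoreflectionData T)

lemma C_mem (X : T) : Q.C.obj X ∈ Q.colocalObjects := ⟨X, ⟨Iso.refl _⟩⟩

lemma counit_unique (hcorefl : Q.IsCoreflection) {W X : T} (hW : W ∈ Q.colocalObjects)
    {g₁ g₂ : W ⟶ Q.C.obj X} (h : g₁ ≫ Q.counit.app X = g₂ ≫ Q.counit.app X) : g₁ = g₂ := by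
  obtain ⟨g, -, hu⟩ := hcorefl hW (g₂ ≫ Q.counit.app X)
  rw [hu g₁ h, hu g₂ rfl]

lemma isIso_counit (hcorefl : Q.IsCoreflection) {W : T} (hW : W ∈ Q.colocalObjects) :
    IsIso (Q.counit.app W) := by
  obtain ⟨g, hg, -⟩ := hcorefl hW (𝟙 W)
  refine ⟨g, ?_, hg⟩
  apply counit_unique Q hcorefl (C_mem Q W)
  rw [assoc, hg]
  simp

lemma mem_of_isIso_counit {W : T} (h : IsIso (Q.counit.app W)) : W ∈ Q.colocalObjects :=
  ⟨W, ⟨asIso (Q.counit.app W)⟩⟩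

lemma zero_mem (hcorefl : Q.IsCoreflection) : (0 : T) ∈ Q.colocalObjects := by
  have hz : IsZero (0 : T) := isZero_zero T
  have hg : (0 : (0 : T) ⟶ Q.C.obj 0) ≫ Q.counit.app 0 = 𝟙 (0 : T) := hz.eq_of_src _ _
  refine ⟨0, ⟨⟨Q.counit.app 0, 0, ?_, hg⟩⟩⟩
  apply counit_unique Q hcorefl (C_mem Q 0)
  exact hz.eq_of_tgt _ _

lemma shift_mem (hcorefl : Q.IsCoreflection) (hcof : ClosedUnderCofibres Q.colocalObjects)
    {A : T} (hA : A ∈ Q.colocalObjects) : A⟦(1 : ℤ)⟧ ∈ Q.colocalObjects := by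
  have hd := rot_of_distTriang _ (contractible_distinguished A)
  exact hcof _ _ _ hd hA (zero_mem Q hcorefl)

lemma key (hcorefl : Q.IsCoreflection) (hext : ClosedUnderExtensions Q.colocalObjects)
    {A Y : T} (hA : A ∈ Q.colocalObjects) (δ : A ⟶ (Q.C.obj Y)⟦(1 : ℤ)⟧)
    (hδ : δ ≫ (Q.counit.app Y)⟦(1 : ℤ)⟧' = 0) : δ = 0 := by
  obtain ⟨P, i, g, hT⟩ := distinguished_cocone_triangle₂ δ
  have hP : P ∈ Q.colocalObjects := hext i g δ hT (C_mem Q Y) hA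
  have hzero : (Triangle.mk i g δ).invRotate.mor₁ ≫ Q.counit.app Y = 0 := by
    have hnat := (shiftEquiv T (1 : ℤ)).unitIso.inv.naturality (Q.counit.app Y)
    simp only [Triangle.invRotate_mor₁, Triangle.mk_mor₃]
    refine (Preadditive.neg_comp _ _).trans ?_
    refine (congrArg Neg.neg ((assoc _ _ _).trans ?_)).trans neg_zero
    have hn := (shiftFunctorCompIsoId T (1 : ℤ) (-1) (by omega)).hom.naturality (Q.counit.app Y)
    refine (congrArg (fun m => _ ≫ m) hn.symm).trans ?_
    refine (assoc _ _ _).symm.trans ?_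
    refine (congrArg (fun m => m ≫ _)
      (((shiftFunctor T (-1)).map_comp _ _).symm.trans ?_)).trans zero_comp
    exact (congrArg _ hδ).trans ((shiftFunctor T (-1)).map_zero _ _)
  obtain ⟨τ, hτ⟩ := Triangle.yoneda_exact₂ _ (inv_rot_of_distTriang _ hT)
    (Q.counit.app Y) hzero
  obtain ⟨ρ, hρ, -⟩ := hcorefl hP τ
  have hiρ : i ≫ ρ = 𝟙 (Q.C.obj Y) := by
    apply counit_unique Q hcorefl (C_mem Q Y)
    rw [assoc, hρ, id_comp]
    exact hτ.symm
  have h31 : δ ≫ i⟦(1 : ℤ)⟧' = 0 := comp_distTriang_mor_zero₃₁ _ hT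
  calc δ = δ ≫ (i ≫ ρ)⟦(1 : ℤ)⟧' := by
          rw [hiρ, CategoryTheory.Functor.map_id, comp_id]
    _ = (δ ≫ i⟦(1 : ℤ)⟧') ≫ ρ⟦(1 : ℤ)⟧' := by rw [Functor.map_comp, assoc]
    _ = 0 := by rw [h31, zero_comp]

lemma closedUnderCoproducts [HasProducts.{v} T] [HasCoproducts.{v} T] (hcorefl : Q.IsCoreflection) :
    ClosedUnderCoproducts Q.colocalObjects := by
  intro ι f hf
  have hgi : ∀ i, ∃ g : f i ⟶ Q.C.obj (∐ f), g ≫ Q.counit.app (∐ f) = Sigma.ι f i :=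
    fun i => (hcorefl (hf i) (Sigma.ι f i)).exists
  choose gi hgi using hgi
  have hgc : Sigma.desc gi ≫ Q.counit.app (∐ f) = 𝟙 (∐ f) := by
    ext i
    simp [hgi]
  refine ⟨∐ f, ⟨⟨Q.counit.app (∐ f), Sigma.desc gi, ?_, hgc⟩⟩⟩
  apply counit_unique Q hcorefl (C_mem Q (∐ f))
  rw [assoc, hgc]
  simp

end CoreflAux

end AuxProofs


section Statements

variable {T : Type u} [Category.{v} T] [HasZeroObject T] [Preadditive T] [HasShift T ℤ]
  [∀ n : ℤ, (shiftFunctor T n).Additive] [Pretriangulated T]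
  [HasProducts.{v} T] [HasCoproducts.{v} T]

/-- A coreflection `C` on a triangulated category is semiexact if and only if `C`
preserves every distinguished triangle `X → Y → Z → ΣX` in which `X` is `C`-colocal: applying
`C` and the counit yields a distinguished triangle `CX → CY → CZ → ΣCX`. -/
theorem statement3 (Q : CoreflectionData T) (hcorefl : Q.IsCoreflection) :
    IsSemilocalizing Q.colocalObjects ↔
      ∀ ⦃X Y Z : T⦄ (u : X ⟶ Y) (v : Y ⟶ Z) (w : Z ⟶ X⟦(1:ℤ)⟧),
        (Triangle.mk u v w ∈ distTriang T) → X ∈ Q.colocalObjects →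
        ∃ w' : Q.C.obj Z ⟶ (Q.C.obj X)⟦(1:ℤ)⟧,
          w' ≫ (Q.counit.app X)⟦(1:ℤ)⟧' = Q.counit.app Z ≫ w ∧
          Triangle.mk (Q.C.map u) (Q.C.map v) w' ∈ distTriang T := by
  constructor
  · intro hS X Y Z u v w hT hX
    have hcx : IsIso (Q.counit.app X) := CoreflAux.isIso_counit Q hcorefl hX
    haveI := hcx
    haveI : IsIso ((Q.counit.app X)⟦(1 : ℤ)⟧') := inferInstance
    obtain ⟨W, j, δW, hTC⟩ := distinguished_cocone_triangle (Q.C.map u)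
    have hW : W ∈ Q.colocalObjects :=
      hS.2.1 (Q.C.map u) j δW hTC (CoreflAux.C_mem Q X) (CoreflAux.C_mem Q Y)
    have hnatu : Q.C.map u ≫ Q.counit.app Y = Q.counit.app X ≫ u := by
      simpa using Q.counit.naturality u
    obtain ⟨h₀, hh₂, hh₃⟩ := complete_distinguished_triangle_morphism _ _ hTC hT
      (Q.counit.app X) (Q.counit.app Y) hnatu
    have hex : ∃ h : W ⟶ Z, j ≫ h = Q.counit.app Y ≫ v ∧
        δW ≫ (Q.counit.app X)⟦(1 : ℤ)⟧' = h ≫ w := ⟨h₀, hh₂, hh₃⟩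
    obtain ⟨h, hh₂', hh₃'⟩ := hex
    clear hh₂ hh₃
    have hCuj : Q.C.map u ≫ j = 0 := comp_distTriang_mor_zero₁₂ _ hTC
    have hwu : w ≫ u⟦(1 : ℤ)⟧' = 0 := comp_distTriang_mor_zero₃₁ _ hT
    have hinj : ∀ {A : T}, A ∈ Q.colocalObjects → ∀ g : A ⟶ W, g ≫ h = 0 → g = 0 := by
      intro A hA g hg
      have h2 : (g ≫ δW) ≫ (Q.counit.app X)⟦(1 : ℤ)⟧' = 0 := by
        rw [assoc, hh₃', ← assoc, hg, zero_comp]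
      have h1 : g ≫ δW = 0 := by
        rwa [← cancel_mono ((Q.counit.app X)⟦(1 : ℤ)⟧'), zero_comp]
      obtain ⟨b, hb⟩ : ∃ b : A ⟶ Q.C.obj Y, g = b ≫ j := Triangle.coyoneda_exact₃ _ hTC g h1
      have hb' : g = b ≫ j := hb
      have h3 : (b ≫ Q.counit.app Y) ≫ v = 0 := by
        rw [assoc, ← hh₂', ← assoc, ← hb', hg]
      obtain ⟨a, ha⟩ : ∃ a : A ⟶ X, b ≫ Q.counit.app Y = a ≫ u :=
          Triangle.coyoneda_exact₂ _ hT (b ≫ Q.counit.app Y) h3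
      have ha' : b ≫ Q.counit.app Y = a ≫ u := ha
      have hb0 : b = (a ≫ inv (Q.counit.app X)) ≫ Q.C.map u := by
        apply CoreflAux.counit_unique Q hcorefl hA
        have hrhs : ((a ≫ inv (Q.counit.app X)) ≫ Q.C.map u) ≫ Q.counit.app Y = a ≫ u := by
          rw [assoc, hnatu, assoc, IsIso.inv_hom_id_assoc]
        rw [ha', hrhs]
      rw [hb', hb0, assoc, hCuj, comp_zero]
    have hsurj : ∀ {A : T}, A ∈ Q.colocalObjects → ∀ f : A ⟶ Z, ∃ g : A ⟶ W, g ≫ h = f := by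
      intro A hA f
      set x : A ⟶ (Q.C.obj X)⟦(1 : ℤ)⟧ := (f ≫ w) ≫ inv ((Q.counit.app X)⟦(1 : ℤ)⟧')
        with hxdef
      have hxw : x ≫ (Q.counit.app X)⟦(1 : ℤ)⟧' = f ≫ w := by
        rw [hxdef, assoc, IsIso.inv_hom_id, comp_id]
      have hkey0 : (x ≫ (Q.C.map u)⟦(1 : ℤ)⟧') ≫ (Q.counit.app Y)⟦(1 : ℤ)⟧' = 0 := by
        rw [assoc, ← Functor.map_comp, hnatu, Functor.map_comp, ← assoc, hxw, assoc, hwu,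
          comp_zero]
      have hx0 : x ≫ (Q.C.map u)⟦(1 : ℤ)⟧' = 0 :=
        CoreflAux.key Q hcorefl hS.2.2 hA _ hkey0
      obtain ⟨g₁, hg₁⟩ := Triangle.coyoneda_exact₁ _ hTC x hx0
      obtain ⟨g₀, hg₀'⟩ : ∃ g₀ : A ⟶ W, x = g₀ ≫ δW := ⟨g₁, hg₁⟩
      have hd : (g₀ ≫ h - f) ≫ w = 0 := by
        rw [Preadditive.sub_comp, assoc, ← hh₃', ← assoc, ← hg₀', hxw, sub_self]
      obtain ⟨y₁, hy₁⟩ := Triangle.coyoneda_exact₃ _ hT (g₀ ≫ h - f) hd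
      obtain ⟨y, hy'⟩ : ∃ y : A ⟶ Y, g₀ ≫ h - f = y ≫ v := ⟨y₁, hy₁⟩
      obtain ⟨y', hy'', -⟩ := hcorefl hA y
      refine ⟨g₀ - y' ≫ j, ?_⟩
      rw [Preadditive.sub_comp, assoc, hh₂', ← assoc, hy'', ← hy']
      exact sub_sub_cancel _ _
    obtain ⟨k, hk⟩ := hsurj (CoreflAux.C_mem Q Z) (Q.counit.app Z)
    obtain ⟨h', hh', -⟩ := hcorefl hW h
    have hkh' : k ≫ h' = 𝟙 (Q.C.obj Z) := by
      apply CoreflAux.counit_unique Q hcorefl (CoreflAux.C_mem Q Z)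
      rw [assoc, hh', hk, id_comp]
    have hh'k : h' ≫ k = 𝟙 W := by
      have h0 : (h' ≫ k - 𝟙 W) ≫ h = 0 := by
        rw [Preadditive.sub_comp, assoc, hk, hh', id_comp, sub_self]
      have h1 := hinj hW _ h0
      rwa [sub_eq_zero] at h1
    have hjh' : j ≫ h' = Q.C.map v := by
      apply CoreflAux.counit_unique Q hcorefl (CoreflAux.C_mem Q Y)
      have hnatv : Q.C.map v ≫ Q.counit.app Z = Q.counit.app Y ≫ v := by
        simpa using Q.counit.naturality v
      rw [assoc, hh', hh₂', hnatv]
    refine ⟨k ≫ δW, ?_, ?_⟩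
    · rw [assoc, hh₃', ← assoc, hk]
    · refine isomorphic_distinguished _ hTC _ ?_
      refine Triangle.isoMk _ _ (Iso.refl _) (Iso.refl _) (Iso.mk k h' hkh' hh'k) ?_ ?_ ?_
      · dsimp
        exact (comp_id _).trans (id_comp _).symm
      · dsimp
        have hvk : Q.C.map v ≫ k = j := by rw [← hjh', assoc, hh'k, comp_id]
        exact hvk.trans (id_comp _).symm
      · dsimp
        exact (congrArg (fun m => (k ≫ δW) ≫ m) (CategoryTheory.Functor.map_id _ _)).trans (comp_id _)
  · intro hpres
    refine ⟨CoreflAux.closedUnderCoproducts Q hcorefl, ?_, ?_⟩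
    · intro X Y Z u v w hT hX hY
      obtain ⟨w', hw', hdist⟩ := hpres u v w hT hX
      have hnatu : Q.C.map u ≫ Q.counit.app Y = Q.counit.app X ≫ u := by
        simpa using Q.counit.naturality u
      have hnatv : Q.C.map v ≫ Q.counit.app Z = Q.counit.app Y ≫ v := by
        simpa using Q.counit.naturality v
      let φ : Triangle.mk (Q.C.map u) (Q.C.map v) w' ⟶ Triangle.mk u v w :=
        Triangle.homMk _ _ (Q.counit.app X) (Q.counit.app Y) (Q.counit.app Z) hnatu hnatv hw'
      have h3 : IsIso (Q.counit.app Z) :=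
        isIso₃_of_isIso₁₂ φ hdist hT (CoreflAux.isIso_counit Q hcorefl hX)
          (CoreflAux.isIso_counit Q hcorefl hY)
      exact CoreflAux.mem_of_isIso_counit Q h3
    · intro X Y Z u v w hT hX hZ
      obtain ⟨w', hw', hdist⟩ := hpres u v w hT hX
      have hnatu : Q.C.map u ≫ Q.counit.app Y = Q.counit.app X ≫ u := by
        simpa using Q.counit.naturality u
      have hnatv : Q.C.map v ≫ Q.counit.app Z = Q.counit.app Y ≫ v := by
        simpa using Q.counit.naturality v
      let φ : Triangle.mk (Q.C.map u) (Q.C.map v) w' ⟶ Triangle.mk u v w :=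
        Triangle.homMk _ _ (Q.counit.app X) (Q.counit.app Y) (Q.counit.app Z) hnatu hnatv hw'
      have h2 : IsIso (Q.counit.app Y) :=
        isIso₂_of_isIso₁₃ φ hdist hT (CoreflAux.isIso_counit Q hcorefl hX)
          (CoreflAux.isIso_counit Q hcorefl hZ)
      exact CoreflAux.mem_of_isIso_counit Q h2

end Statements

end Paper
end

section
/- Let L be a semiexact reflection on a triangulated category T with unit l : Id → L. Then there exists a semiexact coreflection C on T, with counit c : C → Id, such that for every object X the morphisms c_X : CX → X and l_X : X → LX fit into a distinguished triangle CX → X → LX → ΣCX; moreover, the class of C-colocal objects coincides with the class of L-acyclic objects (those X with LX = 0) and the class of L-local objects coincides with the class of C-acyclic objects (those X with CX = 0). Conversely, every semiexact coreflection C on T arises in this way from a semiexact reflection L, and this correspondence between semiexact reflections and semiexact coreflections is bijective. -/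
open CategoryTheory Category Limits Pretriangulated

universe v u

namespace Paper

section Aux
set_option linter.unusedSectionVars false

variable {T : Type u} [Category.{v} T] [HasZeroObject T] [Preadditive T] [HasShift T ℤ]
  [∀ n : ℤ, (shiftFunctor T n).Additive] [Pretriangulated T]
  [HasProducts.{v} T] [HasCoproducts.{v} T]

lemma hom_shift_one_zero {X V : T} (h : ∀ g : X ⟶ V⟦(-1:ℤ)⟧, g = 0)
    (f : X⟦(1:ℤ)⟧ ⟶ V) : f = 0 := by
  apply (shiftFunctor T (-1:ℤ)).map_injective
  rw [Functor.map_zero]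
  exact (cancel_epi ((shiftEquiv T (1:ℤ)).unitIso.hom.app X)).1 (by exact (h _).trans comp_zero.symm)

lemma hom_shift_neg_one_zero {W Z : T} (h : ∀ g : W⟦(1:ℤ)⟧ ⟶ Z, g = 0)
    (f : W ⟶ Z⟦(-1:ℤ)⟧) : f = 0 := by
  apply (shiftFunctor T (1:ℤ)).map_injective
  rw [Functor.map_zero]
  exact (cancel_mono ((shiftEquiv T (1:ℤ)).counitIso.hom.app Z)).1 (by exact (h _).trans zero_comp.symm)

lemma isZero_pempty_prod (f : PEmpty.{v+1} → T) : IsZero (∏ᶜ f) := by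
  rw [IsZero.iff_id_eq_zero]
  exact Pi.hom_ext _ _ (fun i => i.elim)

lemma isZero_pempty_coprod (f : PEmpty.{v+1} → T) : IsZero (∐ f) := by
  rw [IsZero.iff_id_eq_zero]
  exact Sigma.hom_ext _ _ (fun i => i.elim)

section Part1

variable (R : ReflectionData T)

/-- The chosen fibre of the unit. -/
noncomputable def CObj (X : T) : T :=
  (distinguished_cocone_triangle₁ (R.unit.app X)).choose

noncomputable def cApp (X : T) : CObj R X ⟶ X :=
  (distinguished_cocone_triangle₁ (R.unit.app X)).choose_spec.choose

noncomputable def wApp (X : T) : R.L.obj X ⟶ (CObj R X)⟦(1:ℤ)⟧ :=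
  (distinguished_cocone_triangle₁ (R.unit.app X)).choose_spec.choose_spec.choose

lemma cTriangle_dist (X : T) :
    Triangle.mk (cApp R X) (R.unit.app X) (wApp R X) ∈ distTriang T :=
  (distinguished_cocone_triangle₁ (R.unit.app X)).choose_spec.choose_spec.choose_spec

variable {R} (hR : R.IsReflection) (hS : IsSemicolocalizing R.localObjects)

include hR in
lemma unit_isIso_of_local {W : T} (hW : W ∈ R.localObjects) : IsIso (R.unit.app W) := by
  obtain ⟨g, hg, -⟩ := hR hW (𝟙 W)
  refine ⟨g, hg, ?_⟩
  have h1 : R.unit.app W ≫ (g ≫ R.unit.app W) = R.unit.app W := by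
    rw [← assoc, hg]; simp
  have h2 : R.unit.app W ≫ 𝟙 (R.L.obj W) = R.unit.app W := comp_id _
  exact (hR (R.L.obj_mem_essImage W) (R.unit.app W)).unique h1 h2

include hR in
lemma orth_of_acyclic {A W : T} (h : IsZero (R.L.obj A)) (hW : W ∈ R.localObjects)
    (f : A ⟶ W) : f = 0 := by
  obtain ⟨g, hg, -⟩ := hR hW f
  rw [← hg, h.eq_zero_of_src g, comp_zero]

include hR in
lemma acyclic_of_orth {A : T} (h : ∀ W ∈ R.localObjects, ∀ f : A ⟶ W, f = 0) :
    IsZero (R.L.obj A) := by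
  rw [IsZero.iff_id_eq_zero]
  have hu : R.unit.app A = 0 := h _ (R.L.obj_mem_essImage A) _
  exact (hR (R.L.obj_mem_essImage A) (R.unit.app A)).unique (comp_id _)
    (by rw [comp_zero, hu])

include hS in
lemma mem_locals_of_isZero {V : T} (hV : IsZero V) : V ∈ R.localObjects := by
  have h0 : (∏ᶜ (fun x => V : PEmpty.{v+1} → T)) ∈ R.localObjects :=
    hS.1 _ (fun i => i.elim)
  exact Functor.essImage.ofIso ((isZero_pempty_prod _).iso hV) h0

include hS in
lemma shift_neg_local {W : T} (hW : W ∈ R.localObjects) : W⟦(-1:ℤ)⟧ ∈ R.localObjects := by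
  have hd := inv_rot_of_distTriang _ (inv_rot_of_distTriang _ (contractible_distinguished W))
  refine hS.2.1 _ _ _ hd ?_ hW
  exact mem_locals_of_isZero hS
    ((shiftFunctor T (-1:ℤ)).map_isZero (isZero_zero T))

include hR hS in
lemma fiber_orth (X : T) {W : T} (hW : W ∈ R.localObjects) (f : CObj R X ⟶ W) : f = 0 := by
  have ht : Triangle.mk (cApp R X) (R.unit.app X) (wApp R X) ∈ distTriang T :=
    cTriangle_dist R X
  have ht' := inv_rot_of_distTriang _ ht
  set t' := (Triangle.mk (cApp R X) (R.unit.app X) (wApp R X)).invRotate with ht'def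
  -- the map from the shifted local object
  set g : (R.L.obj X)⟦(-1:ℤ)⟧ ⟶ W := t'.mor₁ ≫ f with hg_def
  have hg0 : g = 0 := by
    obtain ⟨E, u, e, ht2⟩ := distinguished_cocone_triangle g
    have hLX : R.L.obj X ∈ R.localObjects := R.L.obj_mem_essImage X
    have hLX1 : ((R.L.obj X)⟦(-1:ℤ)⟧)⟦(1:ℤ)⟧ ∈ R.localObjects :=
      Functor.essImage.ofIso ((shiftEquiv T (1:ℤ)).counitIso.app (R.L.obj X)).symm hLX
    have hE : E ∈ R.localObjects := by
      refine hS.2.2 _ _ _ (rot_of_distTriang _ ht2) hW hLX1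
    obtain ⟨h, hc1, hc2⟩ := complete_distinguished_triangle_morphism t'
      (Triangle.mk g u e) ht' ht2 (𝟙 _) f (by exact (id_comp _).symm)
    obtain ⟨h', hh', -⟩ := hR hE h
    have key : h' ≫ e = (shiftEquiv T (1:ℤ)).counitIso.inv.app (R.L.obj X) := by
      refine (hR hLX1 t'.mor₃).unique ?_ ?_
      · rw [← assoc, hh']
        exact hc2.symm.trans ((congrArg (fun x => t'.mor₃ ≫ x) ((shiftFunctor T (1:ℤ)).map_id _)).trans (comp_id _))
      · rfl
    have he0 : e ≫ g⟦(1:ℤ)⟧' = 0 := comp_distTriang_mor_zero₃₁ _ ht2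
    have : g⟦(1:ℤ)⟧' = 0 := by
      refine (cancel_epi ((shiftEquiv T (1:ℤ)).counitIso.inv.app (R.L.obj X))).1 ?_
      have h5 : (h' ≫ e) ≫ g⟦(1:ℤ)⟧' = 0 := by rw [assoc, he0, comp_zero]
      rw [key] at h5
      exact h5.trans comp_zero.symm
    apply (shiftFunctor T (1:ℤ)).map_injective
    rw [this, Functor.map_zero]
  obtain ⟨k, hk⟩ := Triangle.yoneda_exact₂ t' ht' f hg0
  obtain ⟨k', hk', -⟩ := hR hW k
  have h0 : cApp R X ≫ R.unit.app X = 0 := comp_distTriang_mor_zero₁₂ _ ht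
  refine hk.trans ?_
  have e1 : t'.mor₂ ≫ k = cApp R X ≫ (R.unit.app X ≫ k') := by rw [← hk']; exact rfl
  have e2 : cApp R X ≫ (R.unit.app X ≫ k') = 0 := by
    exact (assoc _ _ _).symm.trans ((congrArg (fun x => x ≫ k') h0).trans zero_comp)
  exact e1.trans e2

include hR hS in
lemma cmap_unique {X Y : T} {a b : CObj R X ⟶ CObj R Y}
    (hab : a ≫ cApp R Y = b ≫ cApp R Y) : a = b := by
  have h0 : (a - b) ≫ cApp R Y = 0 := by rw [Preadditive.sub_comp, hab, sub_self]
  obtain ⟨φ, hφ⟩ := Triangle.coyoneda_exact₂ _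
    (inv_rot_of_distTriang _ (cTriangle_dist R Y)) (a - b) h0
  have hz : φ = 0 := fiber_orth hR hS X (shift_neg_local hS (R.L.obj_mem_essImage Y)) φ
  rw [← sub_eq_zero, hφ, hz, zero_comp]
  rfl

variable (R) in
noncomputable def cMap {X Y : T} (f : X ⟶ Y) : CObj R X ⟶ CObj R Y :=
  (complete_distinguished_triangle_morphism₁ _ _ (cTriangle_dist R X) (cTriangle_dist R Y)
    f (R.L.map f) (by exact (R.unit.naturality f).symm)).choose

lemma cMap_spec₁ {X Y : T} (f : X ⟶ Y) : cApp R X ≫ f = cMap R f ≫ cApp R Y :=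
  (complete_distinguished_triangle_morphism₁ _ _ (cTriangle_dist R X) (cTriangle_dist R Y)
    f (R.L.map f) (by exact (R.unit.naturality f).symm)).choose_spec.1

noncomputable def Cfun : T ⥤ T where
  obj X := CObj R X
  map f := cMap R f
  map_id X := by
    apply cmap_unique hR hS
    show cMap R (𝟙 X) ≫ cApp R X = 𝟙 (CObj R X) ≫ cApp R X
    rw [id_comp, ← cMap_spec₁, comp_id]
  map_comp {X Y Z} f g := by
    apply cmap_unique hR hS
    show cMap R (f ≫ g) ≫ cApp R Z = (cMap R f ≫ cMap R g) ≫ cApp R Z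
    rw [← cMap_spec₁, assoc, ← cMap_spec₁, ← assoc, ← assoc, ← cMap_spec₁]

noncomputable def QData : CoreflectionData T where
  C := Cfun hR hS
  counit :=
    { app := fun X => cApp R X
      naturality := fun X Y f => by
        simpa [Cfun] using (cMap_spec₁ (R := R) f).symm }

lemma QData_colocal_iff (X : T) :
    X ∈ (QData hR hS).colocalObjects ↔ IsZero (R.L.obj X) := by
  constructor
  · rintro ⟨X₀, ⟨iso⟩⟩
    apply acyclic_of_orth hR
    intro W hW f
    have h1 : iso.hom ≫ f = 0 := fiber_orth hR hS X₀ hW (iso.hom ≫ f)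
    rw [← id_comp f, ← iso.inv_hom_id, assoc, h1, comp_zero]
  · intro h
    have : IsIso (cApp R X) :=
      (Triangle.isZero₃_iff_isIso₁ _ (cTriangle_dist R X)).1 h
    exact Functor.essImage.ofIso (asIso (cApp R X)) ((Cfun hR hS).obj_mem_essImage X)

lemma QData_local_iff (X : T) :
    X ∈ R.localObjects ↔ IsZero ((QData hR hS).C.obj X) := by
  constructor
  · intro h
    exact (Triangle.isZero₁_iff_isIso₂ _ (cTriangle_dist R X)).2 (unit_isIso_of_local hR h)
  · intro h
    have : IsIso (R.unit.app X) :=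
      (Triangle.isZero₁_iff_isIso₂ _ (cTriangle_dist R X)).1 h
    exact Functor.essImage.ofIso (asIso (R.unit.app X)).symm (R.L.obj_mem_essImage X)

include hR hS in
lemma coreflection_exun (X : T) {W : T} (hWz : IsZero (R.L.obj W)) (f : W ⟶ X) :
    ∃! g : W ⟶ CObj R X, g ≫ cApp R X = f := by
  have h1 : f ≫ R.unit.app X = 0 :=
    orth_of_acyclic hR hWz (R.L.obj_mem_essImage X) _
  obtain ⟨g, hg⟩ := Triangle.coyoneda_exact₂ _ (cTriangle_dist R X) f h1
  change W ⟶ CObj R X at g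
  change f = g ≫ cApp R X at hg
  refine ⟨g, hg.symm, ?_⟩
  intro g' hg'
  have h2 : (g' - g) ≫ cApp R X = 0 := by
    rw [Preadditive.sub_comp, ← hg, hg', sub_self]
  obtain ⟨φ, hφ⟩ := Triangle.coyoneda_exact₂ _
    (inv_rot_of_distTriang _ (cTriangle_dist R X)) _ h2
  have hz : φ = 0 :=
    orth_of_acyclic hR hWz (shift_neg_local hS (R.L.obj_mem_essImage X)) φ
  rw [← sub_eq_zero, hφ, hz, zero_comp]
  rfl

lemma QData_isCoreflection : (QData hR hS).IsCoreflection := by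
  intro X W hW f
  exact coreflection_exun hR hS X ((QData_colocal_iff hR hS W).1 hW) f

include hR hS in
lemma orthSet_semiloc :
    IsSemilocalizing {A : T | ∀ W ∈ R.localObjects, ∀ f : A ⟶ W, f = 0} := by
  refine ⟨?_, ?_, ?_⟩
  · intro ι f hf W hW g
    refine Sigma.hom_ext _ _ (fun i => ?_)
    rw [comp_zero]
    exact hf i W hW _
  · intro X Y Z u v w hdist hX hY W hW f
    have h1 : v ≫ f = 0 := hY W hW _
    obtain ⟨φ, hφ⟩ := Triangle.yoneda_exact₃ _ hdist f h1
    have hz : φ = 0 := hom_shift_one_zero (fun g => hX _ (shift_neg_local hS hW) g) φ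
    rw [hφ, hz, comp_zero]
    rfl
  · intro X Y Z u v w hdist hX hZ W hW f
    have h1 : u ≫ f = 0 := hX W hW _
    obtain ⟨φ, hφ⟩ := Triangle.yoneda_exact₂ _ hdist f h1
    rw [hφ, hZ W hW φ]
    exact comp_zero

lemma QData_semiloc : IsSemilocalizing (QData hR hS).colocalObjects := by
  have hset : (QData hR hS).colocalObjects
      = {A : T | ∀ W ∈ R.localObjects, ∀ f : A ⟶ W, f = 0} := by
    ext X
    constructor
    · intro h W hW f
      exact orth_of_acyclic hR ((QData_colocal_iff hR hS X).1 h) hW f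
    · intro h
      exact (QData_colocal_iff hR hS X).2 (acyclic_of_orth hR h)
  rw [hset]
  exact orthSet_semiloc hR hS

end Part1

section Part2

variable (Q : CoreflectionData T)

noncomputable def LObj (X : T) : T :=
  (distinguished_cocone_triangle (Q.counit.app X)).choose

noncomputable def lApp (X : T) : X ⟶ LObj Q X :=
  (distinguished_cocone_triangle (Q.counit.app X)).choose_spec.choose

noncomputable def vApp (X : T) : LObj Q X ⟶ (Q.C.obj X)⟦(1:ℤ)⟧ :=
  (distinguished_cocone_triangle (Q.counit.app X)).choose_spec.choose_spec.choose

lemma lTriangle_dist (X : T) :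
    Triangle.mk (Q.counit.app X) (lApp Q X) (vApp Q X) ∈ distTriang T :=
  (distinguished_cocone_triangle (Q.counit.app X)).choose_spec.choose_spec.choose_spec

variable {Q} (hQ : Q.IsCoreflection) (hSQ : IsSemilocalizing Q.colocalObjects)

include hQ in
lemma counit_isIso_of_colocal {W : T} (hW : W ∈ Q.colocalObjects) :
    IsIso (Q.counit.app W) := by
  obtain ⟨g, hg, -⟩ := hQ hW (𝟙 W)
  refine ⟨g, ?_, hg⟩
  have h1 : (Q.counit.app W ≫ g) ≫ Q.counit.app W = Q.counit.app W := by
    rw [assoc, hg]; simp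
  have h2 : 𝟙 (Q.C.obj W) ≫ Q.counit.app W = Q.counit.app W := id_comp _
  exact (hQ (Q.C.obj_mem_essImage W) (Q.counit.app W)).unique h1 h2

include hQ in
lemma orth_of_Cacyclic {Y W : T} (h : IsZero (Q.C.obj Y)) (hW : W ∈ Q.colocalObjects)
    (f : W ⟶ Y) : f = 0 := by
  obtain ⟨g, hg, -⟩ := hQ hW f
  rw [← hg, h.eq_zero_of_tgt g, zero_comp]

include hQ in
lemma Cacyclic_of_orth {Y : T} (h : ∀ W ∈ Q.colocalObjects, ∀ f : W ⟶ Y, f = 0) :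
    IsZero (Q.C.obj Y) := by
  rw [IsZero.iff_id_eq_zero]
  have hu : Q.counit.app Y = 0 := h _ (Q.C.obj_mem_essImage Y) _
  exact (hQ (Q.C.obj_mem_essImage Y) (Q.counit.app Y)).unique (id_comp _)
    (by rw [zero_comp, hu])

include hSQ in
lemma mem_colocals_of_isZero {V : T} (hV : IsZero V) : V ∈ Q.colocalObjects := by
  have h0 : (∐ (fun x => V : PEmpty.{v+1} → T)) ∈ Q.colocalObjects :=
    hSQ.1 _ (fun i => i.elim)
  exact Functor.essImage.ofIso ((isZero_pempty_coprod _).iso hV) h0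

include hSQ in
lemma shift_pos_colocal {W : T} (hW : W ∈ Q.colocalObjects) :
    W⟦(1:ℤ)⟧ ∈ Q.colocalObjects := by
  have hd := rot_of_distTriang _ (contractible_distinguished W)
  refine hSQ.2.1 _ _ _ hd hW ?_
  exact mem_colocals_of_isZero hSQ (isZero_zero T)

include hQ hSQ in
lemma cofiber_orth (X : T) {W : T} (hW : W ∈ Q.colocalObjects)
    (f : W ⟶ LObj Q X) : f = 0 := by
  have ht : Triangle.mk (Q.counit.app X) (lApp Q X) (vApp Q X) ∈ distTriang T :=
    lTriangle_dist Q X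
  set t := Triangle.mk (Q.counit.app X) (lApp Q X) (vApp Q X) with htdef
  set g : W ⟶ (Q.C.obj X)⟦(1:ℤ)⟧ := f ≫ vApp Q X with hg_def
  have hg0 : g = 0 := by
    obtain ⟨E, u, e, ht2⟩ := distinguished_cocone_triangle₁ g
    have hCX : Q.C.obj X ∈ Q.colocalObjects := Q.C.obj_mem_essImage X
    have hCX1 : ((Q.C.obj X)⟦(1:ℤ)⟧)⟦(-1:ℤ)⟧ ∈ Q.colocalObjects :=
      Functor.essImage.ofIso ((shiftEquiv T (1:ℤ)).unitIso.app (Q.C.obj X)) hCX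
    have hE : E ∈ Q.colocalObjects :=
      hSQ.2.2 _ _ _ (inv_rot_of_distTriang _ ht2) hCX1 hW
    obtain ⟨a, ha1, ha2⟩ := complete_distinguished_triangle_morphism₁ (Triangle.mk u g e)
      t.rotate ht2 (rot_of_distTriang _ ht) f (𝟙 _) (by exact comp_id _)
    change E ⟶ X at a
    obtain ⟨a₀, ha₀, -⟩ := hQ hE a
    have ha2' : e ≫ a⟦(1:ℤ)⟧' = -((Q.counit.app X)⟦(1:ℤ)⟧') := by
      have h' := ha2
      exact h'.trans (id_comp _)
    have h3 : (shiftFunctor T (1:ℤ)).preimage e ≫ a = -(Q.counit.app X) := by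
      apply (shiftFunctor T (1:ℤ)).map_injective
      rw [Functor.map_comp, Functor.map_preimage, Functor.map_neg]
      exact ha2'
    have key : (-(shiftFunctor T (1:ℤ)).preimage e) ≫ a₀ = 𝟙 (Q.C.obj X) := by
      refine (hQ (Q.C.obj_mem_essImage X)
        (show Q.C.obj X ⟶ X from Q.counit.app X)).unique ?_ (id_comp _)
      show ((-(shiftFunctor T (1:ℤ)).preimage e) ≫ a₀) ≫ Q.counit.app X = Q.counit.app X
      rw [assoc, ha₀, Preadditive.neg_comp, h3, neg_neg]
    have key' : (shiftFunctor T (1:ℤ)).preimage e ≫ a₀ = -(𝟙 (Q.C.obj X)) := by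
      rw [Preadditive.neg_comp] at key
      exact neg_eq_iff_eq_neg.mp key
    have h6 : e ≫ a₀⟦(1:ℤ)⟧' = -(𝟙 _) := by
      rw [← Functor.map_preimage (shiftFunctor T (1:ℤ)) e, ← Functor.map_comp, key',
        Functor.map_neg, CategoryTheory.Functor.map_id]
    have h4 : g ≫ e = 0 := comp_distTriang_mor_zero₂₃ _ ht2
    have h7 : g ≫ e ≫ a₀⟦(1:ℤ)⟧' = 0 := by
      rw [← assoc, h4, zero_comp]
    rw [h6, Preadditive.comp_neg, comp_id, neg_eq_zero] at h7
    exact h7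
  obtain ⟨k, hk⟩ := Triangle.coyoneda_exact₃ t ht f hg0
  change W ⟶ X at k
  change f = k ≫ lApp Q X at hk
  obtain ⟨k₀, hk₀, -⟩ := hQ hW k
  have h0 : Q.counit.app X ≫ lApp Q X = 0 := comp_distTriang_mor_zero₁₂ _ ht
  rw [hk, ← hk₀, assoc, h0, comp_zero]

include hQ hSQ in
lemma lmap_unique {X Y : T} {a b : LObj Q X ⟶ LObj Q Y}
    (hab : lApp Q X ≫ a = lApp Q X ≫ b) : a = b := by
  have h0 : lApp Q X ≫ (a - b) = 0 := by rw [Preadditive.comp_sub, hab, sub_self]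
  obtain ⟨ψ, hψ⟩ := Triangle.yoneda_exact₃ _ (lTriangle_dist Q X) (a - b) h0
  have hz : ψ = 0 :=
    cofiber_orth hQ hSQ Y (shift_pos_colocal hSQ (Q.C.obj_mem_essImage X)) ψ
  rw [← sub_eq_zero, hψ, hz, comp_zero]
  rfl

variable (Q) in
noncomputable def lMap {X Y : T} (f : X ⟶ Y) : LObj Q X ⟶ LObj Q Y :=
  (complete_distinguished_triangle_morphism _ _ (lTriangle_dist Q X) (lTriangle_dist Q Y)
    (Q.C.map f) f (by exact (Q.counit.naturality f).symm)).choose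

lemma lMap_spec₁ {X Y : T} (f : X ⟶ Y) : lApp Q X ≫ lMap Q f = f ≫ lApp Q Y :=
  (complete_distinguished_triangle_morphism _ _ (lTriangle_dist Q X) (lTriangle_dist Q Y)
    (Q.C.map f) f (by exact (Q.counit.naturality f).symm)).choose_spec.1

noncomputable def Lfun : T ⥤ T where
  obj X := LObj Q X
  map f := lMap Q f
  map_id X := by
    apply lmap_unique hQ hSQ
    show lApp Q X ≫ lMap Q (𝟙 X) = lApp Q X ≫ 𝟙 (LObj Q X)
    rw [lMap_spec₁, id_comp, comp_id]
  map_comp {X Y Z} f g := by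
    apply lmap_unique hQ hSQ
    show lApp Q X ≫ lMap Q (f ≫ g) = lApp Q X ≫ lMap Q f ≫ lMap Q g
    rw [lMap_spec₁, ← assoc, lMap_spec₁, assoc, assoc, lMap_spec₁]

noncomputable def RData : ReflectionData T where
  L := Lfun hQ hSQ
  unit :=
    { app := fun X => lApp Q X
      naturality := fun X Y f => by
        simpa [Lfun] using (lMap_spec₁ (Q := Q) f).symm }

lemma RData_local_iff (X : T) :
    X ∈ (RData hQ hSQ).localObjects ↔ IsZero (Q.C.obj X) := by
  constructor
  · rintro ⟨X₀, ⟨iso⟩⟩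
    apply Cacyclic_of_orth hQ
    intro W hW f
    have h1 : f ≫ iso.inv = 0 := cofiber_orth hQ hSQ X₀ hW (f ≫ iso.inv)
    rw [← comp_id f, ← iso.inv_hom_id, ← assoc, h1, zero_comp]
  · intro h
    have : IsIso (lApp Q X) :=
      (Triangle.isZero₁_iff_isIso₂ _ (lTriangle_dist Q X)).1 h
    exact Functor.essImage.ofIso (asIso (lApp Q X)).symm
      ((Lfun hQ hSQ).obj_mem_essImage X)

lemma RData_colocal_iff (X : T) :
    X ∈ Q.colocalObjects ↔ IsZero ((RData hQ hSQ).L.obj X) := by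
  constructor
  · intro h
    exact Triangle.isZero₃_of_isIso₁ _ (lTriangle_dist Q X) (counit_isIso_of_colocal hQ h)
  · intro h
    have : IsIso (Q.counit.app X) :=
      (Triangle.isZero₃_iff_isIso₁ _ (lTriangle_dist Q X)).1 h
    exact Functor.essImage.ofIso (asIso (Q.counit.app X)) (Q.C.obj_mem_essImage X)

lemma RData_isReflection : (RData hQ hSQ).IsReflection := by
  intro X W hW f
  have hWz : IsZero (Q.C.obj W) := (RData_local_iff hQ hSQ W).1 hW
  have h1 : Q.counit.app X ≫ f = 0 :=
    orth_of_Cacyclic hQ hWz (Q.C.obj_mem_essImage X) _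
  obtain ⟨g, hg⟩ := Triangle.yoneda_exact₂ _ (lTriangle_dist Q X) f h1
  change LObj Q X ⟶ W at g
  change f = lApp Q X ≫ g at hg
  refine ⟨g, hg.symm, ?_⟩
  intro g' hg'
  change LObj Q X ⟶ W at g'
  change lApp Q X ≫ g' = f at hg'
  have h2 : lApp Q X ≫ (g' - g) = 0 := by
    rw [Preadditive.comp_sub, ← hg, hg', sub_self]
  obtain ⟨ψ, hψ⟩ := Triangle.yoneda_exact₃ _ (lTriangle_dist Q X) _ h2
  have hz : ψ = 0 :=
    orth_of_Cacyclic hQ hWz (shift_pos_colocal hSQ (Q.C.obj_mem_essImage X)) ψ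
  exact sub_eq_zero.mp (hψ.trans (by rw [hz]; exact comp_zero))

include hSQ in
lemma corthSet_semicoloc :
    IsSemicolocalizing {Y : T | ∀ W ∈ Q.colocalObjects, ∀ f : W ⟶ Y, f = 0} := by
  refine ⟨?_, ?_, ?_⟩
  · intro ι f hf W hW g
    refine Pi.hom_ext _ _ (fun i => ?_)
    rw [zero_comp]
    exact hf i W hW _
  · intro X Y Z u v w hdist hY hZ W hW f
    have h1 : f ≫ u = 0 := by
      have := hY W hW (f ≫ u)
      exact this
    obtain ⟨ψ, hψ⟩ := Triangle.coyoneda_exact₂ _ (inv_rot_of_distTriang _ hdist) f h1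
    have hz : ψ = 0 :=
      hom_shift_neg_one_zero (fun g => hZ _ (shift_pos_colocal hSQ hW) g) ψ
    rw [hψ, hz, zero_comp]
    rfl
  · intro X Y Z u v w hdist hX hZ W hW f
    have h1 : f ≫ v = 0 := hZ W hW _
    obtain ⟨ψ, hψ⟩ := Triangle.coyoneda_exact₂ _ hdist f h1
    rw [hψ, hX W hW ψ]
    exact zero_comp

lemma RData_semicoloc : IsSemicolocalizing (RData hQ hSQ).localObjects := by
  have hset : (RData hQ hSQ).localObjects
      = {Y : T | ∀ W ∈ Q.colocalObjects, ∀ f : W ⟶ Y, f = 0} := by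
    ext X
    constructor
    · intro h W hW f
      exact orth_of_Cacyclic hQ ((RData_local_iff hQ hSQ X).1 h) hW f
    · intro h
      exact (RData_local_iff hQ hSQ X).2 (Cacyclic_of_orth hQ h)
  rw [hset]
  exact corthSet_semicoloc hSQ

end Part2

section IsoHelpers

lemma isIso₁_of_isIso₂₃' {T₁ T₂ : Triangle T} (φ : T₁ ⟶ T₂) (h₁ : T₁ ∈ distTriang T)
    (h₂ : T₂ ∈ distTriang T) (i2 : IsIso φ.hom₂) (i3 : IsIso φ.hom₃) : IsIso φ.hom₁ := by
  haveI := i2; haveI := i3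
  have h := isIso₂_of_isIso₁₃ ((invRotate T).map φ) (inv_rot_of_distTriang _ h₁)
    (inv_rot_of_distTriang _ h₂)
    (inferInstanceAs (IsIso (φ.hom₃⟦(-1:ℤ)⟧'))) i2
  exact h

lemma isIso₃_of_isIso₁₂' {T₁ T₂ : Triangle T} (φ : T₁ ⟶ T₂) (h₁ : T₁ ∈ distTriang T)
    (h₂ : T₂ ∈ distTriang T) (i1 : IsIso φ.hom₁) (i2 : IsIso φ.hom₂) : IsIso φ.hom₃ := by
  haveI := i1; haveI := i2
  have h := isIso₂_of_isIso₁₃ ((rotate T).map φ) (rot_of_distTriang _ h₁)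
    (rot_of_distTriang _ h₂) i2
    (inferInstanceAs (IsIso (φ.hom₁⟦(1:ℤ)⟧')))
  exact h

end IsoHelpers

end Aux

section Statements

variable {T : Type u} [Category.{v} T] [HasZeroObject T] [Preadditive T] [HasShift T ℤ]
  [∀ n : ℤ, (shiftFunctor T n).Additive] [Pretriangulated T]
  [HasProducts.{v} T] [HasCoproducts.{v} T]

/-- A reflection `L` and a coreflection `C` are matched if for every `X` the counit and the unit
fit into a distinguished triangle `CX → X → LX → ΣCX`, the `C`-colocal objects are exactly the
`L`-acyclic objects (those with `LX = 0`), and the `L`-local objects are exactly the `C`-acyclic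
objects (those with `CX = 0`). -/
def Matched (R : ReflectionData T) (Q : CoreflectionData T) : Prop :=
  (∀ X : T, ∃ w : R.L.obj X ⟶ (Q.C.obj X)⟦(1:ℤ)⟧,
      Triangle.mk (Q.counit.app X) (R.unit.app X) w ∈ distTriang T) ∧
  Q.colocalObjects = {X : T | IsZero (R.L.obj X)} ∧
  R.localObjects = {X : T | IsZero (Q.C.obj X)}

lemma part3 (R : ReflectionData T) (Q Q' : CoreflectionData T) (hR : R.IsReflection)
    (hS : IsSemicolocalizing R.localObjects) (hQ : Q.IsCoreflection)
    (hQ' : Q'.IsCoreflection) (hM : Matched R Q) (hM' : Matched R Q') :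
    Nonempty (Q.C ≅ Q'.C) := by
  have tri : ∀ X : T, Triangle.mk (Q.counit.app X) (R.unit.app X) ((hM.1 X).choose)
      ∈ distTriang T := fun X => (hM.1 X).choose_spec
  have tri' : ∀ X : T, Triangle.mk (Q'.counit.app X) (R.unit.app X) ((hM'.1 X).choose)
      ∈ distTriang T := fun X => (hM'.1 X).choose_spec
  have hac : ∀ X : T, IsZero (R.L.obj (Q.C.obj X)) := by
    intro X
    have h : Q.C.obj X ∈ Q.colocalObjects := Q.C.obj_mem_essImage X
    rw [hM.2.1] at h
    exact h
  have cancel : ∀ {A : T}, IsZero (R.L.obj A) → ∀ (Y : T) (d : A ⟶ Q'.C.obj Y),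
      d ≫ Q'.counit.app Y = 0 → d = 0 := by
    intro A hA Y d hd
    obtain ⟨φ, hφ⟩ := Triangle.coyoneda_exact₂ _ (inv_rot_of_distTriang _ (tri' Y)) d hd
    rw [hφ, orth_of_acyclic hR hA (shift_neg_local hS (R.L.obj_mem_essImage Y)) φ]
    exact zero_comp
  have comp : ∀ X : T, ∃ a : Q.C.obj X ⟶ Q'.C.obj X,
      a ≫ Q'.counit.app X = Q.counit.app X ∧ IsIso a := by
    intro X
    obtain ⟨a, ha1, ha2⟩ := complete_distinguished_triangle_morphism₁ _ _ (tri X) (tri' X)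
      (𝟙 X) (𝟙 (R.L.obj X))
      ((comp_id (R.unit.app X)).trans (id_comp (R.unit.app X)).symm)
    change Q.C.obj X ⟶ Q'.C.obj X at a
    have ha1' : a ≫ Q'.counit.app X = Q.counit.app X := ha1.symm.trans (comp_id _)
    refine ⟨a, ha1', ?_⟩
    exact isIso₁_of_isIso₂₃'
      (T₁ := Triangle.mk (Q.counit.app X) (R.unit.app X) ((hM.1 X).choose))
      (T₂ := Triangle.mk (Q'.counit.app X) (R.unit.app X) ((hM'.1 X).choose))
      { hom₁ := a, hom₂ := 𝟙 X, hom₃ := 𝟙 (R.L.obj X),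
        comm₁ := ha1
        comm₂ := (comp_id (R.unit.app X)).trans (id_comp (R.unit.app X)).symm
        comm₃ := ha2 } (tri X) (tri' X)
      (inferInstanceAs (IsIso (𝟙 X))) (inferInstanceAs (IsIso (𝟙 (R.L.obj X))))
  choose a ha hiso using comp
  refine ⟨NatIso.ofComponents (fun X => @asIso _ _ _ _ (a X) (hiso X)) ?_⟩
  intro X Y f
  have hd : (Q.C.map f ≫ a Y - a X ≫ Q'.C.map f) ≫ Q'.counit.app Y = 0 := by
    rw [Preadditive.sub_comp, assoc, ha Y, Q.counit.naturality f, assoc,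
      Q'.counit.naturality f, ← assoc, ha X, sub_self]
  have h0 := cancel (hac X) Y _ hd
  rw [sub_eq_zero] at h0
  simpa using h0

lemma part4 (R R' : ReflectionData T) (Q : CoreflectionData T) (hR : R.IsReflection)
    (hR' : R'.IsReflection) (hQ : Q.IsCoreflection)
    (hSQ : IsSemilocalizing Q.colocalObjects) (hM : Matched R Q) (hM' : Matched R' Q) :
    Nonempty (R.L ≅ R'.L) := by
  have tri : ∀ X : T, Triangle.mk (Q.counit.app X) (R.unit.app X) ((hM.1 X).choose)
      ∈ distTriang T := fun X => (hM.1 X).choose_spec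
  have tri' : ∀ X : T, Triangle.mk (Q.counit.app X) (R'.unit.app X) ((hM'.1 X).choose)
      ∈ distTriang T := fun X => (hM'.1 X).choose_spec
  have hac : ∀ X : T, IsZero (Q.C.obj (R'.L.obj X)) := by
    intro X
    have h : R'.L.obj X ∈ R'.localObjects := R'.L.obj_mem_essImage X
    rw [hM'.2.2] at h
    exact h
  have cancel : ∀ (X : T) {B : T}, IsZero (Q.C.obj B) → ∀ d : R.L.obj X ⟶ B,
      R.unit.app X ≫ d = 0 → d = 0 := by
    intro X B hB d hd
    obtain ⟨ψ, hψ⟩ := Triangle.yoneda_exact₃ _ (tri X) d hd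
    rw [hψ, orth_of_Cacyclic hQ hB (shift_pos_colocal hSQ (Q.C.obj_mem_essImage X)) ψ]
    exact comp_zero
  have comp : ∀ X : T, ∃ c : R.L.obj X ⟶ R'.L.obj X,
      R.unit.app X ≫ c = R'.unit.app X ∧ IsIso c := by
    intro X
    obtain ⟨c, hc1, hc2⟩ := complete_distinguished_triangle_morphism _ _ (tri X) (tri' X)
      (𝟙 (Q.C.obj X)) (𝟙 X)
      ((comp_id (Q.counit.app X)).trans (id_comp (Q.counit.app X)).symm)
    change R.L.obj X ⟶ R'.L.obj X at c
    have hc1' : R.unit.app X ≫ c = R'.unit.app X := hc1.trans (id_comp _)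
    refine ⟨c, hc1', ?_⟩
    exact isIso₃_of_isIso₁₂'
      (T₁ := Triangle.mk (Q.counit.app X) (R.unit.app X) ((hM.1 X).choose))
      (T₂ := Triangle.mk (Q.counit.app X) (R'.unit.app X) ((hM'.1 X).choose))
      { hom₁ := 𝟙 (Q.C.obj X), hom₂ := 𝟙 X, hom₃ := c,
        comm₁ := (comp_id (Q.counit.app X)).trans (id_comp (Q.counit.app X)).symm
        comm₂ := hc1
        comm₃ := hc2 } (tri X) (tri' X)
      (inferInstanceAs (IsIso (𝟙 (Q.C.obj X)))) (inferInstanceAs (IsIso (𝟙 X)))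
  choose c hc hiso using comp
  refine ⟨NatIso.ofComponents (fun X => @asIso _ _ _ _ (c X) (hiso X)) ?_⟩
  intro X Y f
  have hd : R.unit.app X ≫ (R.L.map f ≫ c Y - c X ≫ R'.L.map f) = 0 := by
    rw [Preadditive.comp_sub, ← assoc, ← R.unit.naturality f, assoc, hc Y,
      ← assoc, hc X, ← R'.unit.naturality f, sub_self]
  have h0 := cancel X (hac Y) _ hd
  rw [sub_eq_zero] at h0
  simpa using h0

/-- Every semiexact reflection `L` gives rise to a semiexact coreflection `C` with
distinguished triangles `CX → X → LX → ΣCX`, the `C`-colocal objects being the `L`-acyclics and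
the `L`-local objects being the `C`-acyclics; conversely, every semiexact coreflection arises
this way, and the correspondence is bijective (up to isomorphism of the functors involved). -/
theorem statement4 :
    (∀ R : ReflectionData T, R.IsReflection → IsSemicolocalizing R.localObjects →
      ∃ Q : CoreflectionData T, Q.IsCoreflection ∧ IsSemilocalizing Q.colocalObjects ∧
        Matched R Q) ∧
    (∀ Q : CoreflectionData T, Q.IsCoreflection → IsSemilocalizing Q.colocalObjects →
      ∃ R : ReflectionData T, R.IsReflection ∧ IsSemicolocalizing R.localObjects ∧
        Matched R Q) ∧
    (∀ (R : ReflectionData T) (Q Q' : CoreflectionData T), R.IsReflection →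
      IsSemicolocalizing R.localObjects → Q.IsCoreflection → Q'.IsCoreflection →
      Matched R Q → Matched R Q' → Nonempty (Q.C ≅ Q'.C)) ∧
    (∀ (R R' : ReflectionData T) (Q : CoreflectionData T), R.IsReflection → R'.IsReflection →
      Q.IsCoreflection → IsSemilocalizing Q.colocalObjects →
      Matched R Q → Matched R' Q → Nonempty (R.L ≅ R'.L)) := by
  refine ⟨?_, ?_, ?_, ?_⟩
  · intro R hR hS
    exact ⟨QData hR hS, QData_isCoreflection hR hS, QData_semiloc hR hS,
      fun X => ⟨wApp R X, cTriangle_dist R X⟩,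
      Set.ext (fun X => QData_colocal_iff hR hS X),
      Set.ext (fun X => QData_local_iff hR hS X)⟩
  · intro Q hQ hSQ
    exact ⟨RData hQ hSQ, RData_isReflection hQ hSQ, RData_semicoloc hQ hSQ,
      fun X => ⟨vApp Q X, lTriangle_dist Q X⟩,
      Set.ext (fun X => RData_colocal_iff hQ hSQ X),
      Set.ext (fun X => RData_local_iff hQ hSQ X)⟩
  · exact part3
  · exact part4

end Statements

end Paper
end

section
/- Let D be any class of objects in a triangulated category T with products and coproducts. If semicoloc(D) is reflective (the inclusion has a left adjoint), then semicoloc(D) = (⊾D)⊿; and if semiloc(D) is coreflective (the inclusion has a right adjoint), then semiloc(D) = ⊾(D⊿). -/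
open CategoryTheory Category Limits Pretriangulated

universe v u

namespace Paper

section AuxGeneral

variable {T : Type u} [Category.{v} T]

lemma reflection_spec {S : Set T} (h : ReflectiveSet S) (X : T) :
    ∃ (W : T) (l : X ⟶ W), W ∈ S ∧
      ∀ ⦃V : T⦄, V ∈ S → ∀ f : X ⟶ V, ∃! g : W ⟶ V, l ≫ g = f := by
  have h' : (ObjectProperty.ι (fun X : T => X ∈ S)).IsRightAdjoint := h
  let ι := ObjectProperty.ι (fun X : T => X ∈ S)
  let adj := Adjunction.ofIsRightAdjoint ι
  refine ⟨ι.obj (ι.leftAdjoint.obj X), adj.unit.app X, (ι.leftAdjoint.obj X).property, ?_⟩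
  intro V hV f
  let e := adj.homEquiv X ⟨V, hV⟩
  refine ⟨(e.symm f).hom, ?_, ?_⟩
  · have h1 : e (e.symm f) = f := e.apply_symm_apply f
    rw [Adjunction.homEquiv_unit] at h1
    exact h1
  · intro g hg
    have h2 : e (ObjectProperty.homMk g) = f := by rw [Adjunction.homEquiv_unit]; exact hg
    rw [← h2, e.symm_apply_apply]
    rfl

lemma coreflection_spec {S : Set T} (h : CoreflectiveSet S) (X : T) :
    ∃ (W : T) (c : W ⟶ X), W ∈ S ∧
      ∀ ⦃V : T⦄, V ∈ S → ∀ f : V ⟶ X, ∃! g : V ⟶ W, g ≫ c = f := by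
  have h' : (ObjectProperty.ι (fun X : T => X ∈ S)).IsLeftAdjoint := h
  let ι := ObjectProperty.ι (fun X : T => X ∈ S)
  let adj := Adjunction.ofIsLeftAdjoint ι
  refine ⟨ι.obj (ι.rightAdjoint.obj X), adj.counit.app X, (ι.rightAdjoint.obj X).property, ?_⟩
  intro V hV f
  let e := adj.homEquiv ⟨V, hV⟩ X
  refine ⟨(e f).hom, ?_, ?_⟩
  · have h1 : e.symm (e f) = f := e.symm_apply_apply f
    rw [Adjunction.homEquiv_counit] at h1
    exact h1
  · intro g hg
    have h2 : e.symm (ObjectProperty.homMk g) = f := by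
      rw [Adjunction.homEquiv_counit]; exact hg
    rw [← h2, e.apply_symm_apply]
    rfl

end AuxGeneral

section AuxTriangulated

open ZeroObject

variable {T : Type u} [Category.{v} T] [HasZeroObject T] [Preadditive T] [HasShift T ℤ]
  [∀ n : ℤ, (shiftFunctor T n).Additive] [Pretriangulated T]

lemma hom_zero_of_shift (a b : ℤ) (hab : a + b = 0) {A B : T}
    (H : ∀ g : A ⟶ B⟦b⟧, g = 0) (f : A⟦a⟧ ⟶ B) : f = 0 := by
  apply ((shiftEquiv' T a b hab).toAdjunction.homEquiv A B).injective
  rw [H (((shiftEquiv' T a b hab).toAdjunction.homEquiv A B) f)]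
  erw [Adjunction.homEquiv_unit, Functor.map_zero, comp_zero]
  rfl

lemma hom_zero_of_unshift (a b : ℤ) (hab : a + b = 0) {A B : T}
    (H : ∀ g : A⟦a⟧ ⟶ B, g = 0) (f : A ⟶ B⟦b⟧) : f = 0 := by
  apply ((shiftEquiv' T a b hab).toAdjunction.homEquiv A B).symm.injective
  rw [H (((shiftEquiv' T a b hab).toAdjunction.homEquiv A B).symm f)]
  erw [Adjunction.homEquiv_counit, Functor.map_zero, zero_comp]
  rfl

lemma mem_of_iso_of_extensions {S : Set T} (hext : ClosedUnderExtensions S)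
    {P : T} (hP : P ∈ S) (hPz : IsZero P) {X Y : T} (e : X ≅ Y) (hY : Y ∈ S) : X ∈ S := by
  have hdist : Triangle.mk e.inv (0 : X ⟶ P) (0 : P ⟶ Y⟦(1:ℤ)⟧) ∈ distTriang T := by
    refine isomorphic_distinguished _ (contractible_distinguished Y) _ ?_
    exact Triangle.isoMk _ _ (Iso.refl Y) e hPz.isoZero (by exact (Iso.inv_hom_id e).trans (comp_id _).symm)
      (by exact zero_comp.trans comp_zero.symm) (by exact zero_comp.trans comp_zero.symm)
  exact hext _ _ _ hdist hY hP

section WithLim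

variable [HasProducts.{v} T] [HasCoproducts.{v} T]

lemma zero_mem_of_products {S : Set T} (h : ClosedUnderProducts S) :
    ∃ P : T, P ∈ S ∧ IsZero P := by
  refine ⟨∏ᶜ (fun (i : PEmpty.{v+1}) => (0 : T)), h _ (fun i => i.elim), ?_⟩
  rw [IsZero.iff_id_eq_zero]
  apply Limits.Pi.hom_ext
  intro i
  exact i.elim

lemma zero_mem_of_coproducts {S : Set T} (h : ClosedUnderCoproducts S) :
    ∃ P : T, P ∈ S ∧ IsZero P := by
  refine ⟨∐ (fun (i : PEmpty.{v+1}) => (0 : T)), h _ (fun i => i.elim), ?_⟩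
  rw [IsZero.iff_id_eq_zero]
  apply Limits.Sigma.hom_ext
  intro i
  exact i.elim

end WithLim

lemma shift_neg_one_mem {S : Set T} (hfib : ClosedUnderFibres S) (hext : ClosedUnderExtensions S)
    {P : T} (hP : P ∈ S) (hPz : IsZero P) {Y : T} (hY : Y ∈ S) : Y⟦(-1 : ℤ)⟧ ∈ S := by
  have h1 := inv_rot_of_distTriang _ (inv_rot_of_distTriang _ (contractible_distinguished Y))
  set T2 := (contractibleTriangle Y).invRotate.invRotate with hT2
  have hz : IsZero (T2.obj₂) := by
    apply (shiftFunctor T (-1 : ℤ)).map_isZero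
    exact isZero_zero T
  have h2 : T2.obj₂ ∈ S := mem_of_iso_of_extensions hext hP hPz (hz.iso hPz) hP
  exact hfib T2.mor₁ T2.mor₂ T2.mor₃ h1 h2 hY

lemma shift_nonpos_mem {S : Set T} (hfib : ClosedUnderFibres S) (hext : ClosedUnderExtensions S)
    {P : T} (hP : P ∈ S) (hPz : IsZero P) {Y : T} (hY : Y ∈ S) :
    ∀ k : ℤ, k ≤ 0 → Y⟦k⟧ ∈ S := by
  have key : ∀ n : ℕ, Y⟦(-(n : ℤ))⟧ ∈ S := by
    intro n
    induction n with
    | zero =>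
      exact mem_of_iso_of_extensions hext hP hPz
        ((shiftFunctorZero' T (-((0:ℕ):ℤ)) (by simp)).app Y) hY
    | succ n ih =>
      have e := (shiftFunctorAdd' T (-(n:ℤ)) (-1) (-(((n+1:ℕ)):ℤ)) (by push_cast; ring)).app Y
      exact mem_of_iso_of_extensions hext hP hPz e (shift_neg_one_mem hfib hext hP hPz ih)
  intro k hk
  obtain ⟨n, rfl⟩ : ∃ n : ℕ, k = -(n : ℤ) := ⟨(-k).toNat, by omega⟩
  exact key n

lemma shift_one_mem {S : Set T} (hcof : ClosedUnderCofibres S) (hext : ClosedUnderExtensions S)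
    {P : T} (hP : P ∈ S) (hPz : IsZero P) {Y : T} (hY : Y ∈ S) : Y⟦(1 : ℤ)⟧ ∈ S := by
  have h1 := rot_of_distTriang _ (contractible_distinguished Y)
  set T2 := (contractibleTriangle Y).rotate with hT2
  have h2 : T2.obj₂ ∈ S := mem_of_iso_of_extensions hext hP hPz ((isZero_zero T).iso hPz) hP
  exact hcof T2.mor₁ T2.mor₂ T2.mor₃ h1 hY h2

lemma shift_nonneg_mem {S : Set T} (hcof : ClosedUnderCofibres S) (hext : ClosedUnderExtensions S)
    {P : T} (hP : P ∈ S) (hPz : IsZero P) {Y : T} (hY : Y ∈ S) :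
    ∀ k : ℤ, 0 ≤ k → Y⟦k⟧ ∈ S := by
  have key : ∀ n : ℕ, Y⟦(n : ℤ)⟧ ∈ S := by
    intro n
    induction n with
    | zero =>
      exact mem_of_iso_of_extensions hext hP hPz
        ((shiftFunctorZero' T (((0:ℕ):ℤ)) (by simp)).app Y) hY
    | succ n ih =>
      have e := (shiftFunctorAdd' T (n:ℤ) 1 (((n+1:ℕ)):ℤ) (by push_cast; ring)).app Y
      exact mem_of_iso_of_extensions hext hP hPz e (shift_one_mem hcof hext hP hPz ih)
  intro k hk
  obtain ⟨n, rfl⟩ : ∃ n : ℕ, k = (n : ℤ) := ⟨k.toNat, by omega⟩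
  exact key n

end AuxTriangulated

section AuxOrth

variable {T : Type u} [Category.{v} T] [HasZeroObject T] [Preadditive T] [HasShift T ℤ]
  [∀ n : ℤ, (shiftFunctor T n).Additive] [Pretriangulated T]
  [HasProducts.{v} T] [HasCoproducts.{v} T]

lemma rightSemiOrth_semicolocalizing (E : Set T) :
    IsSemicolocalizing (rightSemiOrth E) := by
  refine ⟨?_, ?_, ?_⟩
  · intro ι f hf E' hE' k hk g
    apply Limits.Pi.hom_ext
    intro b
    rw [zero_comp]
    exact hf b hE' k hk _
  · intro A B C u v w hT hB hC E' hE' k hk f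
    have hT2 : (Triangle.mk u v w).invRotate ∈ distTriang T := inv_rot_of_distTriang _ hT
    obtain ⟨q, hq⟩ := Triangle.coyoneda_exact₂ _ hT2 f (hB hE' k hk _)
    have hq0 : q = 0 := by
      apply hom_zero_of_unshift 1 (-1) (by ring)
      intro g
      have e2 := (shiftFunctorAdd' T k 1 (k+1) rfl).app E'
      have h3 : e2.hom ≫ g = 0 := hC hE' (k+1) (by omega) _
      calc g = e2.inv ≫ (e2.hom ≫ g) := by simp
        _ = 0 := by rw [h3, comp_zero]
    rw [hq, hq0, zero_comp]
    rfl
  · intro A B C u v w hT hA hC E' hE' k hk f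
    obtain ⟨q, hq⟩ := Triangle.coyoneda_exact₂ _ hT f (hC hE' k hk _)
    rw [hq, hA hE' k hk q]; exact zero_comp

lemma leftSemiOrth_semilocalizing (E : Set T) :
    IsSemilocalizing (leftSemiOrth E) := by
  refine ⟨?_, ?_, ?_⟩
  · intro ι f hf E' hE' k hk g
    apply Limits.Sigma.hom_ext
    intro b
    rw [comp_zero]
    exact hf b hE' k hk _
  · intro A B C u v w hT hA hB E' hE' k hk f
    obtain ⟨q, hq⟩ := Triangle.yoneda_exact₃ _ hT f (hB hE' k hk _)
    have hq0 : q = 0 := by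
      apply hom_zero_of_shift 1 (-1) (by ring)
      intro g
      have e2 := (shiftFunctorAdd' T k (-1) (k-1) (by ring)).app E'
      have h3 : g ≫ e2.inv = 0 := hA hE' (k-1) (by omega) _
      calc g = (g ≫ e2.inv) ≫ e2.hom := by simp
        _ = 0 := by rw [h3, zero_comp]
    rw [hq, hq0, comp_zero]
    rfl
  · intro A B C u v w hT hA hC E' hE' k hk f
    obtain ⟨q, hq⟩ := Triangle.yoneda_exact₂ _ hT f (hA hE' k hk _)
    rw [hq, hC hE' k hk q]; exact comp_zero

lemma subset_rightSemiOrth_leftSemiOrth (D : Set T) :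
    D ⊆ rightSemiOrth (leftSemiOrth D) := by
  intro E hE A hA k hk f
  exact hom_zero_of_shift k (-k) (by ring) (fun g => hA hE (-k) (by omega) g) f

lemma subset_leftSemiOrth_rightSemiOrth (D : Set T) :
    D ⊆ leftSemiOrth (rightSemiOrth D) := by
  intro E hE A hA k hk f
  exact hom_zero_of_unshift (-k) k (by ring) (fun g => hA hE (-k) (by omega) g) f

lemma mem_semicoloc {D : Set T} {X : T} :
    X ∈ semicoloc D ↔ ∀ S : Set T, IsSemicolocalizing S → D ⊆ S → X ∈ S := by
  rw [semicoloc, Set.mem_sInter]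
  exact ⟨fun h S h1 h2 => h S ⟨h1, h2⟩, fun h S hS => h S hS.1 hS.2⟩

lemma mem_semiloc {D : Set T} {X : T} :
    X ∈ semiloc D ↔ ∀ S : Set T, IsSemilocalizing S → D ⊆ S → X ∈ S := by
  rw [semiloc, Set.mem_sInter]
  exact ⟨fun h S h1 h2 => h S ⟨h1, h2⟩, fun h S hS => h S hS.1 hS.2⟩

lemma subset_semicoloc (D : Set T) : D ⊆ semicoloc D :=
  fun _ hX => mem_semicoloc.mpr (fun _ _ h2 => h2 hX)

lemma subset_semiloc (D : Set T) : D ⊆ semiloc D :=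
  fun _ hX => mem_semiloc.mpr (fun _ _ h2 => h2 hX)

lemma semicoloc_isSemicolocalizing (D : Set T) : IsSemicolocalizing (semicoloc D) := by
  refine ⟨?_, ?_, ?_⟩
  · intro ι f hf
    exact mem_semicoloc.mpr (fun S h1 h2 => h1.1 f (fun i => mem_semicoloc.mp (hf i) S h1 h2))
  · intro A B C u v w hT hB hC
    exact mem_semicoloc.mpr (fun S h1 h2 => h1.2.1 u v w hT
      (mem_semicoloc.mp hB S h1 h2) (mem_semicoloc.mp hC S h1 h2))
  · intro A B C u v w hT hA hC
    exact mem_semicoloc.mpr (fun S h1 h2 => h1.2.2 u v w hT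
      (mem_semicoloc.mp hA S h1 h2) (mem_semicoloc.mp hC S h1 h2))

lemma semiloc_isSemilocalizing (D : Set T) : IsSemilocalizing (semiloc D) := by
  refine ⟨?_, ?_, ?_⟩
  · intro ι f hf
    exact mem_semiloc.mpr (fun S h1 h2 => h1.1 f (fun i => mem_semiloc.mp (hf i) S h1 h2))
  · intro A B C u v w hT hA hB
    exact mem_semiloc.mpr (fun S h1 h2 => h1.2.1 u v w hT
      (mem_semiloc.mp hA S h1 h2) (mem_semiloc.mp hB S h1 h2))
  · intro A B C u v w hT hA hC
    exact mem_semiloc.mpr (fun S h1 h2 => h1.2.2 u v w hT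
      (mem_semiloc.mp hA S h1 h2) (mem_semiloc.mp hC S h1 h2))

end AuxOrth

section AuxHard

open ZeroObject

variable {T : Type u} [Category.{v} T] [HasZeroObject T] [Preadditive T] [HasShift T ℤ]
  [∀ n : ℤ, (shiftFunctor T n).Additive] [Pretriangulated T]
  [HasProducts.{v} T] [HasCoproducts.{v} T]

lemma hard_refl {S : Set T} (hprod : ClosedUnderProducts S) (hfib : ClosedUnderFibres S)
    (hext : ClosedUnderExtensions S) (href : ReflectiveSet S)
    {X : T} (hX : X ∈ rightSemiOrth (leftSemiOrth S)) : X ∈ S := by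
  obtain ⟨P, hP, hPz⟩ := zero_mem_of_products hprod
  obtain ⟨W, l, hW, huniv⟩ := reflection_spec href X
  obtain ⟨Γ, w, δ, hT⟩ := distinguished_cocone_triangle₁ l
  have key : ∀ ⦃V : T⦄, V ∈ S → ∀ g : Γ ⟶ V, g = 0 := by
    intro V hV g
    have hT₁ : (Triangle.mk w l δ).invRotate ∈ distTriang T := inv_rot_of_distTriang _ hT
    set T₁ := (Triangle.mk w l δ).invRotate with hT₁def
    obtain ⟨F, i, e₀, hT₂⟩ := distinguished_cocone_triangle (T₁.mor₁ ≫ g)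
    obtain ⟨φ, hφ₁, hφ₂⟩ := complete_distinguished_triangle_morphism T₁
      (Triangle.mk (T₁.mor₁ ≫ g) i e₀) hT₁ hT₂ (𝟙 T₁.obj₁) g (by exact (id_comp _).symm)
    simp only [Triangle.mk_obj₁, Triangle.mk_obj₂, Triangle.mk_obj₃, Triangle.mk_mor₁,
      Triangle.mk_mor₂, Triangle.mk_mor₃, Functor.map_id, comp_id, id_comp] at hφ₁ hφ₂
    set u : W ⟶ T₁.obj₁⟦(1:ℤ)⟧ := ((shiftEquiv T (1 : ℤ)).counitIso.app W).inv with hu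
    have hmor₃ : T₁.mor₃ = l ≫ u := rfl
    have hWsh : T₁.obj₁⟦(1:ℤ)⟧ ∈ S :=
      mem_of_iso_of_extensions hext hP hPz ((shiftEquiv T (1 : ℤ)).counitIso.app W) hW
    have hF : F ∈ S := by
      have h3 := rot_of_distTriang _ hT₂
      exact hext _ _ _ h3 hV hWsh
    obtain ⟨φ', hφ', -⟩ := huniv hF φ
    obtain ⟨g₀, -, hg₀u⟩ := huniv hWsh T₁.mor₃
    have e1 : φ' ≫ e₀ = g₀ := hg₀u _ (by
      show l ≫ φ' ≫ e₀ = T₁.mor₃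
      erw [← assoc, hφ', ← hφ₂, CategoryTheory.Functor.map_id, comp_id])
    have e2 : u = g₀ := hg₀u _ hmor₃.symm
    have hsplit : φ' ≫ e₀ = u := e1.trans e2.symm
    have h5 : e₀ ≫ (T₁.mor₁ ≫ g)⟦(1:ℤ)⟧' = 0 := comp_distTriang_mor_zero₃₁ _ hT₂
    have h6 : u ≫ (T₁.mor₁ ≫ g)⟦(1:ℤ)⟧' = 0 := by
      rw [← hsplit, assoc, h5, comp_zero]
    have h7 : (T₁.mor₁ ≫ g)⟦(1:ℤ)⟧' = 0 := by
      have : IsIso u := by rw [hu]; exact Iso.isIso_inv _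
      rw [← IsIso.inv_hom_id_assoc u ((T₁.mor₁ ≫ g)⟦(1:ℤ)⟧'), h6, comp_zero]
    have hzero : T₁.mor₁ ≫ g = 0 := by
      apply (shiftFunctor T (1:ℤ)).map_injective
      rw [Functor.map_zero]
      exact h7
    obtain ⟨q, hq⟩ := Triangle.yoneda_exact₂ T₁ hT₁ g hzero
    obtain ⟨q', hq', -⟩ := huniv hV q
    have h8 : T₁.mor₂ ≫ l = 0 := comp_distTriang_mor_zero₁₂ _ hT
    erw [hq, ← hq', ← assoc, h8, zero_comp]
    rfl
  have hΓ : Γ ∈ leftSemiOrth S := by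
    intro E hE k hk f
    exact key (shift_nonpos_mem hfib hext hP hPz hE k hk) f
  have hw : w = 0 := by
    have h9 := hX hΓ 0 le_rfl (((shiftFunctorZero T ℤ).hom.app Γ) ≫ w)
    rw [← cancel_epi ((shiftFunctorZero T ℤ).hom.app Γ), comp_zero]
    exact h9
  obtain ⟨r, hr⟩ := Triangle.yoneda_exact₂ _ hT (𝟙 X) (by simp [hw]; exact zero_comp)
  simp only [Triangle.mk_mor₂] at hr
  obtain ⟨g₀, -, huniq⟩ := huniv hW l
  have e1 : r ≫ l = g₀ := huniq _ (by show l ≫ r ≫ l = l; erw [← assoc, ← hr, id_comp])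
  have e2 : (𝟙 W : W ⟶ W) = g₀ := huniq _ (by show l ≫ 𝟙 W = l; rw [comp_id])
  have hrl : r ≫ l = 𝟙 W := by rw [e1, ← e2]
  exact mem_of_iso_of_extensions hext hP hPz ⟨l, r, hr.symm, hrl⟩ hW

lemma hard_corefl {S : Set T} (hcopr : ClosedUnderCoproducts S) (hcof : ClosedUnderCofibres S)
    (hext : ClosedUnderExtensions S) (hcor : CoreflectiveSet S)
    {X : T} (hX : X ∈ leftSemiOrth (rightSemiOrth S)) : X ∈ S := by
  obtain ⟨P, hP, hPz⟩ := zero_mem_of_coproducts hcopr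
  obtain ⟨W, c, hW, huniv⟩ := coreflection_spec hcor X
  obtain ⟨Q, p, θ, hT⟩ := distinguished_cocone_triangle c
  have key : ∀ ⦃V : T⦄, V ∈ S → ∀ g : V ⟶ Q, g = 0 := by
    intro V hV g
    obtain ⟨E, j, b, hT₂⟩ := distinguished_cocone_triangle₂ (g ≫ θ)
    have hE : E ∈ S := hext _ _ _ hT₂ hW hV
    obtain ⟨φ, hφ₁, hφ₂⟩ := complete_distinguished_triangle_morphism₂
      (Triangle.mk j b (g ≫ θ)) (Triangle.mk c p θ) hT₂ hT (𝟙 W) g (by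
        show (g ≫ θ) ≫ (shiftFunctor T (1:ℤ)).map (𝟙 W) = g ≫ θ; rw [CategoryTheory.Functor.map_id, comp_id])
    simp only [Triangle.mk_obj₁, Triangle.mk_obj₂, Triangle.mk_obj₃, Triangle.mk_mor₁,
      Triangle.mk_mor₂, Triangle.mk_mor₃, Functor.map_id, comp_id, id_comp] at hφ₁ hφ₂
    obtain ⟨φ', hφ', -⟩ := huniv hE φ
    obtain ⟨g₀, -, huniq⟩ := huniv hW c
    have e1 : j ≫ φ' = g₀ := huniq _ (by show (j ≫ φ') ≫ c = c; erw [assoc, hφ', hφ₁, id_comp])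
    have e2 : (𝟙 W : W ⟶ W) = g₀ := huniq _ (by show 𝟙 W ≫ c = c; rw [id_comp])
    have hj : j ≫ φ' = 𝟙 W := by rw [e1, ← e2]
    have h5 : (g ≫ θ) ≫ j⟦(1:ℤ)⟧' = 0 := comp_distTriang_mor_zero₃₁ _ hT₂
    have hgθ : g ≫ θ = 0 := by
      calc g ≫ θ = (g ≫ θ) ≫ (j ≫ φ')⟦(1:ℤ)⟧' := by rw [hj]; simp
        _ = ((g ≫ θ) ≫ j⟦(1:ℤ)⟧') ≫ φ'⟦(1:ℤ)⟧' := by simp only [Functor.map_comp, assoc]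
        _ = 0 := by rw [h5, zero_comp]
    obtain ⟨q, hq⟩ := Triangle.coyoneda_exact₃ _ hT g hgθ
    simp only [Triangle.mk_mor₂] at hq
    obtain ⟨q', hq', -⟩ := huniv hV q
    have hcp : c ≫ p = 0 := comp_distTriang_mor_zero₁₂ _ hT
    erw [hq, ← hq', assoc, hcp, comp_zero]
    rfl
  have hQ : Q ∈ rightSemiOrth S := by
    intro E hE k hk f
    exact key (shift_nonneg_mem hcof hext hP hPz hE k hk) f
  have hp : p = 0 := by
    have h9 := hX hQ 0 le_rfl (p ≫ (shiftFunctorZero T ℤ).inv.app Q)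
    rw [← cancel_mono ((shiftFunctorZero T ℤ).inv.app Q), zero_comp]
    exact h9
  obtain ⟨r, hr⟩ := Triangle.coyoneda_exact₂ _ hT (𝟙 X) (by simp [hp]; exact comp_zero)
  simp only [Triangle.mk_mor₁] at hr
  obtain ⟨g₀, -, huniq⟩ := huniv hW c
  have e1 : c ≫ r = g₀ := huniq _ (by show (c ≫ r) ≫ c = c; erw [assoc, ← hr, comp_id])
  have e2 : (𝟙 W : W ⟶ W) = g₀ := huniq _ (by show 𝟙 W ≫ c = c; rw [id_comp])
  have hcr : c ≫ r = 𝟙 W := by rw [e1, ← e2]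
  exact mem_of_iso_of_extensions hext hP hPz ⟨r, c, hr.symm, hcr⟩ hW

end AuxHard


section Statements

variable {T : Type u} [Category.{v} T] [HasZeroObject T] [Preadditive T] [HasShift T ℤ]
  [∀ n : ℤ, (shiftFunctor T n).Additive] [Pretriangulated T]
  [HasProducts.{v} T] [HasCoproducts.{v} T]

/-- If `semicoloc(D)` is reflective then `semicoloc(D) = (⊾D)⊿`, and if
`semiloc(D)` is coreflective then `semiloc(D) = ⊾(D⊿)`. -/
theorem statement8 (D : Set T) :
    (ReflectiveSet (semicoloc D) → semicoloc D = rightSemiOrth (leftSemiOrth D)) ∧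
    (CoreflectiveSet (semiloc D) → semiloc D = leftSemiOrth (rightSemiOrth D)) := by
  constructor
  · intro href
    apply Set.Subset.antisymm
    · intro X hX
      exact mem_semicoloc.mp hX _ (rightSemiOrth_semicolocalizing _)
        (subset_rightSemiOrth_leftSemiOrth D)
    · intro X hX
      obtain ⟨h1, h2, h3⟩ := semicoloc_isSemicolocalizing D
      refine hard_refl h1 h2 h3 href ?_
      intro E hE k hk f
      have hE2 : E ∈ leftSemiOrth D :=
        fun E' hE' j hj g => hE (subset_semicoloc D hE') j hj g
      exact hX hE2 k hk f
  · intro hcor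
    apply Set.Subset.antisymm
    · intro X hX
      exact mem_semiloc.mp hX _ (leftSemiOrth_semilocalizing _)
        (subset_leftSemiOrth_rightSemiOrth D)
    · intro X hX
      obtain ⟨h1, h2, h3⟩ := semiloc_isSemilocalizing D
      refine hard_corefl h1 h2 h3 hcor ?_
      intro E hE k hk f
      have hE2 : E ∈ rightSemiOrth D :=
        fun E' hE' j hj g => hE (subset_semiloc D hE') j hj g
      exact hX hE2 k hk f

end Statements

end Paper
end

section
/- Let D be any class of objects in a triangulated category T. Suppose that for each object X of T there is a distinguished triangle CX → X → LX → ΣCX with CX ∈ semiloc(D) and LX ∈ semiloc(D)⊿. Then semiloc(D) is coreflective, with a semiexact coreflection given by X ↦ CX: for every Y ∈ semiloc(D), the morphism CX → X induces a bijection T(Y, CX) ≅ T(Y, X). -/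
open CategoryTheory Category Limits Pretriangulated

universe v u

namespace Paper

section Statements

variable {T : Type u} [Category.{v} T] [HasZeroObject T] [Preadditive T] [HasShift T ℤ]
  [∀ n : ℤ, (shiftFunctor T n).Additive] [Pretriangulated T]
  [HasProducts.{v} T] [HasCoproducts.{v} T]

/-- `Equiv.ofBijective` applied is just the function applied. -/
theorem ofBijective_apply_eq {α β : Sort*} (f : α → β) (hf : Function.Bijective f) (a : α) :
    Equiv.ofBijective f hf a = f a := rfl

/-- If for each object `X` there is a distinguished triangle `CX → X → LX → ΣCX`
with `CX ∈ semiloc(D)` and `LX ∈ semiloc(D)⊿`, then `semiloc(D)` is coreflective, with a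
semiexact coreflection given by `X ↦ CX`: for every `Y ∈ semiloc(D)`, composition with
`CX → X` is a bijection `T(Y, CX) ≅ T(Y, X)`. -/
theorem statement10 (D : Set T) (C : T → T) (c : ∀ X : T, C X ⟶ X)
    (htri : ∀ X : T, ∃ (B : T) (b : X ⟶ B) (w : B ⟶ (C X)⟦(1:ℤ)⟧),
        (Triangle.mk (c X) b w ∈ distTriang T) ∧
        C X ∈ semiloc D ∧ B ∈ rightSemiOrth (semiloc D)) :
    CoreflectiveSet (semiloc D) ∧ IsSemilocalizing (semiloc D) ∧
    ∀ (X : T) ⦃Y : T⦄, Y ∈ semiloc D →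
      Function.Bijective (fun g : Y ⟶ C X => g ≫ c X) := by
  -- `semiloc D` is semilocalizing since it is an intersection of semilocalizing classes.
  have hsemi : IsSemilocalizing (semiloc D) := by
    refine ⟨?_, ?_, ?_⟩
    · intro ι f hf
      exact fun S hS => hS.1.1 f (fun i => hf i S hS)
    · intro X Y Z u v w hT hX hY
      exact fun S hS => hS.1.2.1 u v w hT (hX S hS) (hY S hS)
    · intro X Y Z u v w hT hX hZ
      exact fun S hS => hS.1.2.2 u v w hT (hX S hS) (hZ S hS)
  -- the crucial bijectivity statement
  have key : ∀ (X : T) ⦃Y : T⦄, Y ∈ semiloc D →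
      Function.Bijective (fun g : Y ⟶ C X => g ≫ c X) := by
    intro X Y hY
    obtain ⟨B, b, w, hdt, hC, hB⟩ := htri X
    have homB : ∀ f : Y ⟶ B, f = 0 := by
      intro f
      have h0 : (shiftFunctorZero T ℤ).hom.app Y ≫ f = 0 := hB hY 0 le_rfl _
      calc f = (shiftFunctorZero T ℤ).inv.app Y ≫ ((shiftFunctorZero T ℤ).hom.app Y ≫ f) := by
                simp
        _ = 0 := by rw [h0, comp_zero]
    have homBneg : ∀ f : Y ⟶ B⟦(-1 : ℤ)⟧, f = 0 := by
      intro f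
      have h1 : (shiftFunctor T (1 : ℤ)).map f ≫
          (shiftFunctorCompIsoId T (-1 : ℤ) (1 : ℤ) (by norm_num)).hom.app B = 0 :=
        hB hY 1 one_pos.le _
      have h2 : (shiftFunctor T (1 : ℤ)).map f = 0 := by
        rw [← cancel_mono ((shiftFunctorCompIsoId T (-1 : ℤ) (1 : ℤ) (by norm_num)).hom.app B)]
        simpa using h1
      apply (shiftFunctor T (1 : ℤ)).map_injective
      rw [h2, Functor.map_zero]
    constructor
    · intro g₁ g₂ hgg
      have hgg' : g₁ ≫ c X = g₂ ≫ c X := hgg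
      have hsub : (g₁ - g₂) ≫ (Triangle.mk (c X) b w).invRotate.mor₂ = 0 := by
        show (g₁ - g₂) ≫ c X = 0
        rw [Preadditive.sub_comp, hgg', sub_self]
      obtain ⟨g', hg'⟩ := Triangle.coyoneda_exact₂ _ (inv_rot_of_distTriang _ hdt)
        (g₁ - g₂) hsub
      have hg0 : g' = 0 := homBneg g'
      have : g₁ - g₂ = 0 := by rw [hg', hg0]; exact zero_comp
      exact sub_eq_zero.1 this
    · intro f
      have hfb : f ≫ (Triangle.mk (c X) b w).mor₂ = 0 := homB _
      obtain ⟨g, hg⟩ := Triangle.coyoneda_exact₂ _ hdt f hfb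
      exact ⟨g, hg.symm⟩
  refine ⟨?_, hsemi, key⟩
  -- coreflectivity: each costructured arrow category has a terminal object
  let P : T → Prop := fun X => X ∈ semiloc D
  have hterm : ∀ X : T, HasTerminal (CostructuredArrow (ObjectProperty.ι P) X) := by
    intro X
    have hCx : P (C X) := (htri X).choose_spec.choose_spec.choose_spec.2.1
    refine IsTerminal.hasTerminal (X := CostructuredArrow.mk
      (Y := (⟨C X, hCx⟩ : ObjectProperty.FullSubcategory P)) (c X)) ?_
    refine IsTerminal.ofUniqueHom (fun Z => CostructuredArrow.homMk
      (ObjectProperty.homMk ((Equiv.ofBijective (fun g : Z.left.obj ⟶ C X => g ≫ c X)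
        (key X Z.left.property)).symm Z.hom))
      ((Equiv.ofBijective (fun g : Z.left.obj ⟶ C X => g ≫ c X)
        (key X Z.left.property)).apply_symm_apply Z.hom)) ?_
    intro Z m
    apply CostructuredArrow.hom_ext
    apply ObjectProperty.hom_ext
    apply (key X Z.left.property).injective
    have h2 := (Equiv.ofBijective (fun g : Z.left.obj ⟶ C X => g ≫ c X)
      (key X Z.left.property)).apply_symm_apply Z.hom
    have hm := CostructuredArrow.w m
    simp only [CostructuredArrow.homMk_left, ObjectProperty.homMk_hom]
    have h2' : ((Equiv.ofBijective (fun g : Z.left.obj ⟶ C X => g ≫ c X)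
        (key X Z.left.property)).symm Z.hom) ≫ c X = Z.hom := h2
    refine Eq.trans ?_ h2'.symm
    exact hm
  exact isLeftAdjoint_of_costructuredArrowTerminals _

end Statements

end Paper
end

section
/- In a triangulated category T with products and coproducts, a full subcategory C is coreflective and semilocalizing if and only if the pair (C, C⊿) is a torsion pair, i.e.: T(A, B) = 0 for all A ∈ C and B ∈ C⊿; ΣC ⊆ C; and every object X of T fits into a distinguished triangle A → X → B → ΣA with A ∈ C and B ∈ C⊿. Moreover, if (X, Y) is any torsion pair in T (meaning T(A,B) = 0 for A ∈ X, B ∈ Y, ΣX ⊆ X, and every object sits in a distinguished triangle with first term in X and third term in Y, with X and Y closed under retracts), then X is coreflective and semilocalizing while Y is reflective and semicolocalizing. -/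
open CategoryTheory Category Limits Pretriangulated

universe v u

namespace Paper

section Aux
set_option linter.unusedSectionVars false
open ZeroObject

variable {T : Type u} [Category.{v} T] [HasZeroObject T] [Preadditive T] [HasShift T ℤ]
  [∀ n : ℤ, (shiftFunctor T n).Additive] [Pretriangulated T]
  [HasProducts.{v} T] [HasCoproducts.{v} T]

lemma aux_zero_mem {C : Set T} (hC : IsSemilocalizing C) :
    ∃ Z0 : T, IsZero Z0 ∧ Z0 ∈ C := by
  refine ⟨∐ (fun (x : PEmpty.{v+1}) => (x.elim : T)), ?_, hC.1 _ (fun x => x.elim)⟩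
  rw [IsZero.iff_id_eq_zero]
  apply colimit.hom_ext
  rintro ⟨⟨⟩⟩

lemma aux_iso_mem {C : Set T} (hC : IsSemilocalizing C) {A X : T} (hA : A ∈ C) (e : A ≅ X) :
    X ∈ C := by
  obtain ⟨Z0, hZ0, hZ0mem⟩ := aux_zero_mem hC
  have hdist : Triangle.mk e.hom (0 : X ⟶ Z0) (0 : Z0 ⟶ A⟦(1:ℤ)⟧) ∈ distTriang T := by
    refine isomorphic_distinguished _ (contractible_distinguished A) _ ?_
    exact Triangle.isoMk _ _ (Iso.refl A) e.symm hZ0.isoZero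
      (by exact (e.hom_inv_id).trans (Category.id_comp _).symm)
      (by exact (zero_comp).trans (comp_zero).symm)
      (hZ0.eq_of_src _ _)
  exact hC.2.2 e.hom (0 : X ⟶ Z0) (0 : Z0 ⟶ A⟦(1:ℤ)⟧) hdist hA hZ0mem

lemma aux_shift_one_mem {C : Set T} (hC : IsSemilocalizing C) {A : T} (hA : A ∈ C) :
    A⟦(1:ℤ)⟧ ∈ C := by
  obtain ⟨Z0, hZ0, hZ0mem⟩ := aux_zero_mem hC
  have h0 : (0 : T) ∈ C := aux_iso_mem hC hZ0mem hZ0.isoZero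
  exact hC.2.1 (0 : A ⟶ 0) (0 : (0 : T) ⟶ A⟦(1:ℤ)⟧) (𝟙 (A⟦(1:ℤ)⟧))
    (contractible_distinguished₂ A) hA h0

lemma aux_shift_nonneg_mem {C : Set T} (hC : IsSemilocalizing C) {A : T} (hA : A ∈ C)
    {k : ℤ} (hk : 0 ≤ k) : A⟦k⟧ ∈ C := by
  have hnat : ∀ (n : ℕ), A⟦(n : ℤ)⟧ ∈ C := by
    intro n
    induction n with
    | zero =>
        simp only [Nat.cast_zero]
        exact aux_iso_mem hC hA ((shiftFunctorZero T ℤ).app A).symm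
    | succ n ih =>
        rw [show ((n + 1 : ℕ) : ℤ) = (n : ℤ) + 1 by push_cast; ring]
        exact aux_iso_mem hC (aux_shift_one_mem hC ih) ((shiftFunctorAdd T (n : ℤ) 1).app A).symm
  rw [show k = ((k.toNat : ℕ) : ℤ) from (Int.toNat_of_nonneg hk).symm]
  exact hnat k.toNat

lemma aux_hom_to_shift_neg_one_zero {E W : T} (h : ∀ g : E⟦(1:ℤ)⟧ ⟶ W, g = 0)
    (f : E ⟶ W⟦(-1:ℤ)⟧) : f = 0 := by
  apply (shiftFunctor T (1:ℤ)).map_injective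
  rw [Functor.map_zero, ← cancel_mono ((shiftFunctorCompIsoId T (-1:ℤ) 1 (by omega)).hom.app W :
    W⟦(-1:ℤ)⟧⟦(1:ℤ)⟧ ⟶ W), zero_comp]
  exact h _

lemma aux_factor_fibre_zero {P Q R : T} {u : P ⟶ Q} {v : Q ⟶ R} {w : R ⟶ P⟦(1:ℤ)⟧}
    (hdist : Triangle.mk u v w ∈ distTriang T) {E : T} (f : E ⟶ P) (hfu : f ≫ u = 0)
    (hR : ∀ g : E⟦(1:ℤ)⟧ ⟶ R, g = 0) : f = 0 := by
  obtain ⟨t, ht⟩ := Triangle.coyoneda_exact₂ _ (inv_rot_of_distTriang _ hdist) f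
    (by exact hfu)
  rw [ht, aux_hom_to_shift_neg_one_zero hR t]; exact zero_comp

end Aux

section AdjAux
set_option linter.unusedSectionVars false

variable {T : Type u} [Category.{v} T]

/-- Auxiliary: the hom-set bijection for a weak coreflection with unique factorizations. -/
noncomputable def auxCorefEquiv (S : Set T) (A : T → T) (hA : ∀ Z, A Z ∈ S)
    (a : ∀ Z, A Z ⟶ Z)
    (hlift : ∀ (Z E : T), E ∈ S → ∀ f : E ⟶ Z, ∃! g : E ⟶ A Z, g ≫ a Z = f)
    (c : ObjectProperty.FullSubcategory (fun X => X ∈ S)) (Z : T) :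
    ((ObjectProperty.ι (fun X => X ∈ S)).obj c ⟶ Z) ≃
      (c ⟶ (⟨A Z, hA Z⟩ : ObjectProperty.FullSubcategory (fun X => X ∈ S))) where
  toFun f := ObjectProperty.homMk ((hlift Z c.obj c.property f).exists).choose
  invFun g := (ObjectProperty.ι (fun X => X ∈ S)).map g ≫ a Z
  left_inv f := ((hlift Z c.obj c.property f).exists).choose_spec
  right_inv g := ObjectProperty.hom_ext _ ((hlift Z c.obj c.property
      ((ObjectProperty.ι (fun X => X ∈ S)).map g ≫ a Z)).unique
    ((hlift Z c.obj c.property _).exists).choose_spec rfl)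

lemma auxCorefEquiv_spec (S : Set T) (A : T → T) (hA : ∀ Z, A Z ∈ S)
    (a : ∀ Z, A Z ⟶ Z)
    (hlift : ∀ (Z E : T), E ∈ S → ∀ f : E ⟶ Z, ∃! g : E ⟶ A Z, g ≫ a Z = f)
    (c : ObjectProperty.FullSubcategory (fun X => X ∈ S)) (Z : T)
    (f : (ObjectProperty.ι (fun X => X ∈ S)).obj c ⟶ Z) :
    (ObjectProperty.ι (fun X => X ∈ S)).map (auxCorefEquiv S A hA a hlift c Z f)
      ≫ a Z = f :=
  ((hlift Z c.obj c.property f).exists).choose_spec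

lemma aux_coreflectiveSet_of (S : Set T) (A : T → T) (hA : ∀ Z, A Z ∈ S) (a : ∀ Z, A Z ⟶ Z)
    (hlift : ∀ (Z E : T), E ∈ S → ∀ f : E ⟶ Z, ∃! g : E ⟶ A Z, g ≫ a Z = f) :
    CoreflectiveSet S := by
  have he : ∀ (X' X : ObjectProperty.FullSubcategory (fun X => X ∈ S)) (Z : T) (f : X' ⟶ X)
      (g : (ObjectProperty.ι (fun X => X ∈ S)).obj X ⟶ Z),
      auxCorefEquiv S A hA a hlift X' Z ((ObjectProperty.ι (fun X => X ∈ S)).map f ≫ g)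
        = f ≫ auxCorefEquiv S A hA a hlift X Z g := by
    intro X' X Z f g
    have spec2 : ((ObjectProperty.ι (fun X => X ∈ S)).map f
          ≫ (ObjectProperty.ι (fun X => X ∈ S)).map
              (auxCorefEquiv S A hA a hlift X Z g)) ≫ a Z
        = (ObjectProperty.ι (fun X => X ∈ S)).map f ≫ g := by
      rw [Category.assoc, auxCorefEquiv_spec]
    exact ObjectProperty.hom_ext _ ((hlift Z X'.obj X'.property _).unique
      (auxCorefEquiv_spec S A hA a hlift X' Z _) spec2)
  exact (Adjunction.adjunctionOfEquivRight (auxCorefEquiv S A hA a hlift) he).isLeftAdjoint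

/-- Auxiliary: the hom-set bijection for a weak reflection with unique factorizations. -/
noncomputable def auxReflEquiv (S : Set T) (B : T → T) (hB : ∀ Z, B Z ∈ S)
    (b : ∀ Z, Z ⟶ B Z)
    (hdesc : ∀ (Z E : T), E ∈ S → ∀ f : Z ⟶ E, ∃! g : B Z ⟶ E, b Z ≫ g = f)
    (Z : T) (c : ObjectProperty.FullSubcategory (fun X => X ∈ S)) :
    ((⟨B Z, hB Z⟩ : ObjectProperty.FullSubcategory (fun X => X ∈ S)) ⟶ c) ≃
      (Z ⟶ (ObjectProperty.ι (fun X => X ∈ S)).obj c) where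
  toFun g := b Z ≫ (ObjectProperty.ι (fun X => X ∈ S)).map g
  invFun f := ObjectProperty.homMk ((hdesc Z c.obj c.property f).exists).choose
  left_inv g := ObjectProperty.hom_ext _ ((hdesc Z c.obj c.property
      (b Z ≫ (ObjectProperty.ι (fun X => X ∈ S)).map g)).unique
    ((hdesc Z c.obj c.property _).exists).choose_spec rfl)
  right_inv f := ((hdesc Z c.obj c.property f).exists).choose_spec

lemma aux_reflectiveSet_of (S : Set T) (B : T → T) (hB : ∀ Z, B Z ∈ S) (b : ∀ Z, Z ⟶ B Z)
    (hdesc : ∀ (Z E : T), E ∈ S → ∀ f : Z ⟶ E, ∃! g : B Z ⟶ E, b Z ≫ g = f) :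
    ReflectiveSet S := by
  have he : ∀ (Z : T) (Y Y' : ObjectProperty.FullSubcategory (fun X => X ∈ S)) (g : Y ⟶ Y')
      (h : (⟨B Z, hB Z⟩ : ObjectProperty.FullSubcategory (fun X => X ∈ S)) ⟶ Y),
      auxReflEquiv S B hB b hdesc Z Y' (h ≫ g)
        = auxReflEquiv S B hB b hdesc Z Y h
            ≫ (ObjectProperty.ι (fun X => X ∈ S)).map g := by
    intro Z Y Y' g h
    exact (Category.assoc (b Z) ((ObjectProperty.ι (fun X => X ∈ S)).map h)
      ((ObjectProperty.ι (fun X => X ∈ S)).map g)).symm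
  exact (Adjunction.adjunctionOfEquivLeft (auxReflEquiv S B hB b hdesc) he).isRightAdjoint

end AdjAux

section Statements

variable {T : Type u} [Category.{v} T] [HasZeroObject T] [Preadditive T] [HasShift T ℤ]
  [∀ n : ℤ, (shiftFunctor T n).Additive] [Pretriangulated T]
  [HasProducts.{v} T] [HasCoproducts.{v} T]

/-- A torsion pair `(X, Y)`: both classes are closed under retracts, all morphisms from `X` to
`Y` vanish, `X` is closed under suspension, and every object fits in a distinguished triangle
with first term in `X` and third term in `Y`. -/
def IsTorsionPair (X Y : Set T) : Prop :=
  ClosedUnderRetracts X ∧ ClosedUnderRetracts Y ∧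
  (∀ ⦃A : T⦄, A ∈ X → ∀ ⦃B : T⦄, B ∈ Y → ∀ f : A ⟶ B, f = 0) ∧
  (∀ ⦃A : T⦄, A ∈ X → A⟦(1:ℤ)⟧ ∈ X) ∧
  (∀ Z : T, ∃ (A B : T) (a : A ⟶ Z) (b : Z ⟶ B) (w : B ⟶ A⟦(1:ℤ)⟧),
      (Triangle.mk a b w ∈ distTriang T) ∧ A ∈ X ∧ B ∈ Y)

set_option linter.unusedSectionVars false


lemma aux_part2 {X Y : Set T} (h : IsTorsionPair X Y) :
    CoreflectiveSet X ∧ IsSemilocalizing X ∧ ReflectiveSet Y ∧ IsSemicolocalizing Y := by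
  obtain ⟨hXr, hYr, hhom, hshift, htri⟩ := h
  choose A B a b w hdist hA hB using htri
  -- unique lifts against the coreflection candidates
  have hlift : ∀ (Z E : T), E ∈ X → ∀ f : E ⟶ Z, ∃! g : E ⟶ A Z, g ≫ a Z = f := by
    intro Z E hE f
    obtain ⟨g0, hg0⟩ := Triangle.coyoneda_exact₂ _ (hdist Z) f (hhom hE (hB Z) _)
    have hg : f = g0 ≫ a Z := hg0
    refine ⟨g0, hg.symm, ?_⟩
    intro g' hg'
    have hsub : (g' - show E ⟶ A Z from g0) ≫ a Z = 0 := by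
      rw [Preadditive.sub_comp, hg']
      exact sub_eq_zero.mpr hg
    have h0 := aux_factor_fibre_zero (hdist Z) (g' - show E ⟶ A Z from g0) hsub
      (fun t => hhom (hshift hE) (hB Z) t)
    exact sub_eq_zero.mp h0
  -- unique descents against the reflection candidates
  have hdesc : ∀ (Z E : T), E ∈ Y → ∀ f : Z ⟶ E, ∃! g : B Z ⟶ E, b Z ≫ g = f := by
    intro Z E hE f
    obtain ⟨g0, hg0⟩ := Triangle.yoneda_exact₂ _ (hdist Z) f (hhom (hA Z) hE _)
    have hg : f = b Z ≫ g0 := hg0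
    refine ⟨g0, hg.symm, ?_⟩
    intro g' hg'
    have hsub : b Z ≫ (g' - show B Z ⟶ E from g0) = 0 := by
      rw [Preadditive.comp_sub, hg']
      exact sub_eq_zero.mpr hg
    obtain ⟨t, ht⟩ := Triangle.yoneda_exact₃ _ (hdist Z) (g' - show B Z ⟶ E from g0) hsub
    exact sub_eq_zero.mp (ht.trans (by rw [hhom (hshift (hA Z)) hE t]; exact comp_zero))
  -- membership criteria
  have hmemX : ∀ Z : T, (∀ ⦃W : T⦄, W ∈ Y → ∀ f : Z ⟶ W, f = 0) → Z ∈ X := by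
    intro Z hZ
    obtain ⟨σ, hσ⟩ := Triangle.coyoneda_exact₂ _ (hdist Z) (𝟙 Z) (by
      have : b Z = 0 := hZ (hB Z) (b Z)
      simp [this]
      exact comp_zero)
    exact hXr (hA Z) ⟨σ, a Z, hσ.symm⟩
  have hmemY : ∀ Z : T, (∀ ⦃W : T⦄, W ∈ X → ∀ f : W ⟶ Z, f = 0) → Z ∈ Y := by
    intro Z hZ
    obtain ⟨s, hs⟩ := Triangle.yoneda_exact₂ _ (hdist Z) (𝟙 Z) (by
      have : a Z = 0 := hZ (hA Z) (a Z)
      simp [this]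
      exact zero_comp)
    exact hYr (hB Z) ⟨b Z, s, hs.symm⟩
  refine ⟨aux_coreflectiveSet_of X A hA a hlift, ⟨?_, ?_, ?_⟩,
    aux_reflectiveSet_of Y B hB b hdesc, ⟨?_, ?_, ?_⟩⟩
  · -- X closed under coproducts
    intro ι f hf
    apply hmemX
    intro W hW g
    apply colimit.hom_ext
    intro j
    have hz := hhom (hf j.as) hW (colimit.ι (Discrete.functor f) j ≫ g)
    simp only [hz, comp_zero]
  · -- X closed under cofibres
    intro P Q R u v w' hd hP hQ
    apply hmemX
    intro W hW g
    obtain ⟨t, ht⟩ := Triangle.yoneda_exact₃ _ hd g (hhom hQ hW _)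
    rw [ht, hhom (hshift hP) hW t]; exact comp_zero
  · -- X closed under extensions
    intro P Q R u v w' hd hP hR
    apply hmemX
    intro W hW g
    obtain ⟨t, ht⟩ := Triangle.yoneda_exact₂ _ hd g (hhom hP hW _)
    rw [ht, hhom hR hW t]; exact comp_zero
  · -- Y closed under products
    intro ι f hf
    apply hmemY
    intro W hW g
    apply limit.hom_ext
    intro j
    have hz := hhom hW (hf j.as) (g ≫ limit.π (Discrete.functor f) j)
    simp only [hz, zero_comp]
  · -- Y closed under fibres
    intro P Q R u v w' hd hQ hR
    apply hmemY
    intro W hW g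
    exact aux_factor_fibre_zero hd g (hhom hW hQ _) (fun t => hhom (hshift hW) hR t)
  · -- Y closed under extensions
    intro P Q R u v w' hd hP hR
    apply hmemY
    intro W hW g
    obtain ⟨t, ht⟩ := Triangle.coyoneda_exact₂ _ hd g (hhom hW hR _)
    rw [ht, hhom hW hP t]; exact zero_comp


lemma aux_part1fwd {C : Set T} (hcor : CoreflectiveSet C) (hsemi : IsSemilocalizing C) :
    IsTorsionPair C (rightSemiOrth C) := by
  obtain ⟨G, ⟨adj⟩⟩ := hcor
  -- unique factorization through the counit
  have key : ∀ (Z E : T), E ∈ C → ∀ f : E ⟶ Z,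
      ∃! g : E ⟶ (G.obj Z).obj, g ≫ adj.counit.app Z = f := by
    intro Z E hE f
    refine ⟨(adj.homEquiv ⟨E, hE⟩ Z f).hom, ?_, ?_⟩
    · have h := (adj.homEquiv ⟨E, hE⟩ Z).symm_apply_apply f
      rw [Adjunction.homEquiv_counit] at h
      exact h
    · intro g hg
      have h2 : (adj.homEquiv ⟨E, hE⟩ Z).symm (ObjectProperty.homMk g) = f := by
        rw [Adjunction.homEquiv_counit]
        exact hg
      rw [← h2, Equiv.apply_symm_apply]
      rfl
  have hmem : ∀ Z : T, (G.obj Z).obj ∈ C := fun Z => (G.obj Z).property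
  refine ⟨?_, ?_, ?_, fun A hA => aux_shift_one_mem hsemi hA, ?_⟩
  · -- C closed under retracts
    intro P Q hP hret
    obtain ⟨i, r, hir⟩ := hret
    obtain ⟨r', hr', -⟩ := key Q P hP r
    have hσ : (i ≫ r') ≫ adj.counit.app Q = 𝟙 Q := by
      rw [Category.assoc, hr', hir]
    have hiso : adj.counit.app Q ≫ (i ≫ r') = 𝟙 ((G.obj Q).obj) := by
      refine ((key Q _ (hmem Q) (adj.counit.app Q)).unique ?_ ?_ : _)
      · rw [Category.assoc, hσ]
        simp
      · simp
    exact aux_iso_mem hsemi (hmem Q) ⟨adj.counit.app Q, i ≫ r', hiso, hσ⟩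
  · -- right semi-orthogonal closed under retracts
    intro P Q hP hret
    obtain ⟨i, r, hir⟩ := hret
    intro E hE k hk f
    have h1 : f ≫ i = 0 := hP hE k hk (f ≫ i)
    calc f = (f ≫ i) ≫ r := by rw [Category.assoc, hir, Category.comp_id]
    _ = 0 := by rw [h1, zero_comp]
  · -- homs from C to the right semi-orthogonal vanish
    intro P hP Q hQ f
    have h0 := hQ hP 0 le_rfl ((shiftFunctorZero T ℤ).hom.app P ≫ f)
    calc f = (shiftFunctorZero T ℤ).inv.app P ≫ ((shiftFunctorZero T ℤ).hom.app P ≫ f) := by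
          rw [← Category.assoc, Iso.inv_hom_id_app, Category.id_comp]
    _ = 0 := by rw [h0, comp_zero]
  · -- the torsion triangle
    intro Z
    obtain ⟨B, π, w, hd⟩ := distinguished_cocone_triangle (adj.counit.app Z)
    have hεπ : adj.counit.app Z ≫ π = 0 := comp_distTriang_mor_zero₁₂ _ hd
    -- injectivity of composition with w on maps from objects of C
    have inj : ∀ (D : T), D ∈ C → ∀ d : D ⟶ B, d ≫ w = 0 → d = 0 := by
      intro D hD d hdw
      obtain ⟨d', hd'⟩ := Triangle.coyoneda_exact₃ _ hd d hdw
      have hd'2 : d = d' ≫ π := hd'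
      obtain ⟨d'', hd'', -⟩ := key Z D hD d'
      rw [hd'2, ← hd'']; exact (Category.assoc _ _ _).trans ((congrArg (fun t => d'' ≫ t) hεπ).trans comp_zero)
    -- the counit of B vanishes
    have hcB : adj.counit.app B = 0 := by
      obtain ⟨F, i, p, hdF⟩ := distinguished_cocone_triangle₂ (adj.counit.app B ≫ w)
      have hF : F ∈ C := hsemi.2.2 i p _ hdF (hmem Z) (hmem B)
      obtain ⟨h, hsq1, hsq2⟩ := complete_distinguished_triangle_morphism₂
        (Triangle.mk i p (adj.counit.app B ≫ w)) (Triangle.mk (adj.counit.app Z) π w)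
        hdF hd (𝟙 _) (adj.counit.app B)
        (by exact (congrArg (fun t => (adj.counit.app B ≫ w) ≫ t) (CategoryTheory.Functor.map_id _ _)).trans (Category.comp_id _))
      obtain ⟨h', hh', -⟩ := key Z F hF h
      have hsq2' : p ≫ adj.counit.app B = h ≫ π := hsq2
      have hpe : p ≫ adj.counit.app B = 0 := by
        rw [hsq2', ← hh']; exact (Category.assoc _ _ _).trans ((congrArg (fun t => h' ≫ t) hεπ).trans comp_zero)
      have hih : i ≫ h' = 𝟙 ((G.obj Z).obj) := by
        refine ((key Z _ (hmem Z) (adj.counit.app Z)).unique ?_ ?_ : _)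
        · rw [Category.assoc, hh']
          exact hsq1.trans (Category.id_comp _)
        · rw [Category.id_comp]
      have h31 : (adj.counit.app B ≫ w) ≫ i⟦(1:ℤ)⟧' = 0 :=
        comp_distTriang_mor_zero₃₁ _ hdF
      have hew : adj.counit.app B ≫ w = 0 := by
        calc adj.counit.app B ≫ w
            = ((adj.counit.app B ≫ w) ≫ i⟦(1:ℤ)⟧') ≫ h'⟦(1:ℤ)⟧' := by
              rw [Category.assoc, ← Functor.map_comp, hih]
              simp
        _ = 0 := by rw [h31, zero_comp]
      exact inj _ (hmem B) _ hew
    have hBorth : B ∈ rightSemiOrth C := by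
      intro E hE k hk f
      obtain ⟨f', hf', -⟩ := key B (E⟦k⟧) (aux_shift_nonneg_mem hsemi hE hk) f
      rw [← hf', hcB, comp_zero]
    exact ⟨(G.obj Z).obj, B, adj.counit.app Z, π, w, hd, hmem Z, hBorth⟩


/-- A full subcategory `C` is coreflective and semilocalizing if and only if
`(C, C⊿)` is a torsion pair; moreover, for any torsion pair `(X, Y)`, the class `X` is
coreflective and semilocalizing while `Y` is reflective and semicolocalizing. -/
theorem statement11 :
    (∀ C : Set T, (CoreflectiveSet C ∧ IsSemilocalizing C) ↔
        IsTorsionPair C (rightSemiOrth C)) ∧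
    (∀ X Y : Set T, IsTorsionPair X Y →
        CoreflectiveSet X ∧ IsSemilocalizing X ∧
        ReflectiveSet Y ∧ IsSemicolocalizing Y) := by
  constructor
  · intro C
    constructor
    · rintro ⟨h1, h2⟩
      exact aux_part1fwd h1 h2
    · intro h
      obtain ⟨hc, hs, -, -⟩ := aux_part2 h
      exact ⟨hc, hs⟩
  · intro X Y h
    exact aux_part2 h

end Statements

end Paper
end
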